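/- arXiv:1009.3999 — 2 statements merged into one kernel-verified Lean document; each statement's English description precedes it below -/
import Mathlib

section
/- For the symmetric random walk started from x_N = ⌊αN⌋ with 0 < α < 1, the scaled range R_N/N converges in distribution as N → ∞; explicitly, for every β with 0 < β ≤ 1, the probability P_{⌊αN⌋}(R_N ≥ βN) converges to: 1 if β ≤ min(α,1−α); min(α,1−α)/β if min(α,1−α) < β < max(α,1−α); and (1−β)/β if max(α,1−α) ≤ β ≤ 1. -/
open Filter Topology

/-- Position of the nearest-neighbor walk after the steps `w` (`true` = one step right,
`false` = one step left), started from `x`. -/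
def walkPos (x : ℤ) (w : List Bool) : ℤ :=
  x + (w.count true : ℤ) - (w.count false : ℤ)

/-- `w` is the step sequence of a trajectory on `{0, 1, …, N}` started at `x` and run
exactly until the exit time `τ_N = T_0 ∧ T_N`: all positions strictly before the last
step lie strictly inside `(0, N)`, and the final position is `0` or `N`. -/
def IsExitPath (N : ℕ) (x : ℤ) (w : List Bool) : Prop :=
  (∀ k < w.length, 0 < walkPos x (w.take k) ∧ walkPos x (w.take k) < (N : ℤ)) ∧
    (walkPos x w = 0 ∨ walkPos x w = (N : ℤ))

/-- Probability weight of the step sequence `w` when each step goes right with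
probability `p` and left with probability `1 - p`, independently. -/
noncomputable def wt (p : ℝ) (w : List Bool) : ℝ :=
  p ^ w.count true * (1 - p) ^ w.count false

/-- `prob N p x S` is the probability, for the walk on `{0, …, N}` with right-step
probability `p` started at `x` and stopped at the exit time `τ_N`, that its stopped
trajectory (recorded as the step sequence up to time `τ_N`) satisfies `S`. -/
noncomputable def prob (N : ℕ) (p : ℝ) (x : ℤ) (S : List Bool → Prop) : ℝ :=
  ∑' w : List Bool, Set.indicator {w | IsExitPath N x w ∧ S w} (wt p) w

/-- Expectation of `f` of the stopped trajectory for the walk started at `x`. -/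
noncomputable def expect (N : ℕ) (p : ℝ) (x : ℤ) (f : List Bool → ℝ) : ℝ :=
  ∑' w : List Bool, Set.indicator {w | IsExitPath N x w} (fun w => wt p w * f w) w

/-- Probability for the walk whose starting point is uniformly distributed on
`{0, 1, …, N}`; the event `S` may depend on the starting point. -/
noncomputable def probUniform (N : ℕ) (p : ℝ) (S : ℤ → List Bool → Prop) : ℝ :=
  (∑ x ∈ Finset.range (N + 1), prob N p (x : ℤ) (S (x : ℤ))) / (N + 1)

/-- The set of sites visited by the stopped walk up to time `τ_N` (time `0` included). -/
def rangeSet (x : ℤ) (w : List Bool) : Finset ℤ :=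
  (Finset.range (w.length + 1)).image fun k => walkPos x (w.take k)

/-- The range `R_N`: the number of distinct sites visited up to the exit time. -/
def rangeCount (x : ℤ) (w : List Bool) : ℕ := (rangeSet x w).card

/-- The local time `G(y) = Σ_{k=0}^{τ_N} 1_{X_k = y}` of the stopped trajectory `w`. -/
def localTime (x y : ℤ) (w : List Bool) : ℕ :=
  ((Finset.range (w.length + 1)).filter fun k => walkPos x (w.take k) = y).card

/-- The event `T_y < τ_N`: the walk started at `x` visits `y` at some time
`k ≥ 1` strictly before the end of the stopped trajectory `w`. -/
def hitsBefore (x y : ℤ) (w : List Bool) : Prop :=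
  ∃ k, 1 ≤ k ∧ k < w.length ∧ walkPos x (w.take k) = y

lemma walkPos_nil (x : ℤ) : walkPos x [] = x := by simp [walkPos]

lemma walkPos_append (x : ℤ) (u v : List Bool) :
    walkPos x (u ++ v) = walkPos (walkPos x u) v := by
  simp [walkPos, List.count_append]; ring

lemma walkPos_singleton (x : ℤ) (b : Bool) :
    walkPos x [b] = x + if b then 1 else -1 := by
  cases b <;> simp [walkPos] <;> ring

lemma walkPos_cons (x : ℤ) (b : Bool) (w : List Bool) :
    walkPos x (b :: w) = walkPos (x + if b then 1 else -1) w := by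
  have h : (b :: w) = [b] ++ w := rfl
  rw [h, walkPos_append, walkPos_singleton]

lemma not_injective' : Function.Injective not := by
  intro a b h; cases a <;> cases b <;> simp_all

lemma walkPos_map_not (x : ℤ) (w : List Bool) :
    walkPos x (w.map not) = 2 * x - walkPos x w := by
  have h1 : (w.map not).count true = w.count false := by
    have := List.count_map_of_injective w not not_injective' false
    simpa using this
  have h2 : (w.map not).count false = w.count true := by
    have := List.count_map_of_injective w not not_injective' true
    simpa using this
  simp [walkPos, h1, h2]; ring

/-- one-step bound for prefix positions -/
lemma pos_step (x : ℤ) (w : List Bool) (k : ℕ) :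
    walkPos x (w.take (k+1)) = walkPos x (w.take k) ∨
    walkPos x (w.take (k+1)) = walkPos x (w.take k) + 1 ∨
    walkPos x (w.take (k+1)) = walkPos x (w.take k) - 1 := by
  rw [List.take_succ, walkPos_append]
  rcases h : w[k]? with _ | b
  · simp [walkPos]
  · simp only [Option.toList_some]
    rw [walkPos_singleton]; cases b <;> simp <;> omega

/-- discrete intermediate value theorem (upward) -/
lemma walk_ivt_up (x : ℤ) (w : List Bool) {a c : ℕ} {y : ℤ} (hac : a ≤ c)
    (h1 : walkPos x (w.take a) ≤ y) (h2 : y ≤ walkPos x (w.take c)) :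
    ∃ k, a ≤ k ∧ k ≤ c ∧ walkPos x (w.take k) = y := by
  induction c, hac using Nat.le_induction with
  | base => exact ⟨a, le_refl a, le_refl a, le_antisymm h1 h2⟩
  | succ c hac ih =>
    by_cases h : y ≤ walkPos x (w.take c)
    · obtain ⟨k, hk1, hk2, hk3⟩ := ih h
      exact ⟨k, hk1, hk2.trans (Nat.le_succ c), hk3⟩
    · push_neg at h
      have hs := pos_step x w c
      have he : walkPos x (w.take (c+1)) = y := by omega
      exact ⟨c+1, hac.trans (Nat.le_succ c), le_refl _, he⟩

/-- discrete intermediate value theorem (downward) -/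
lemma walk_ivt_down (x : ℤ) (w : List Bool) {a c : ℕ} {y : ℤ} (hac : a ≤ c)
    (h1 : y ≤ walkPos x (w.take a)) (h2 : walkPos x (w.take c) ≤ y) :
    ∃ k, a ≤ k ∧ k ≤ c ∧ walkPos x (w.take k) = y := by
  have key : ∀ k, walkPos x ((w.map not).take k) = 2 * x - walkPos x (w.take k) := by
    intro k; rw [← List.map_take, walkPos_map_not]
  obtain ⟨k, hk1, hk2, hk3⟩ := walk_ivt_up x (w.map not) (y := 2 * x - y) hac
    (by rw [key]; omega) (by rw [key]; omega)
  rw [key] at hk3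
  exact ⟨k, hk1, hk2, by omega⟩

noncomputable def wtE (w : List Bool) : ENNReal := 2⁻¹ ^ w.length

lemma wtE_ne_zero (w : List Bool) : wtE w ≠ 0 := by
  simp [wtE]

lemma wtE_ne_top (w : List Bool) : wtE w ≠ ⊤ := by
  exact ENNReal.pow_ne_top (by norm_num)

lemma wtE_append (u v : List Bool) : wtE (u ++ v) = wtE u * wtE v := by
  simp [wtE, pow_add]

lemma wtE_nil : wtE [] = 1 := by simp [wtE]

lemma wtE_cons (b : Bool) (w : List Bool) : wtE (b :: w) = 2⁻¹ * wtE w := by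
  simp [wtE, pow_succ]; ring

/-- all boolean lists of length n as a Finset -/
noncomputable def listsLen (n : ℕ) : Finset (List Bool) :=
  (Finset.univ : Finset (Fin n → Bool)).image List.ofFn

lemma mem_listsLen {n : ℕ} {w : List Bool} : w ∈ listsLen n ↔ w.length = n := by
  constructor
  · rintro h
    simp only [listsLen, Finset.mem_image] at h
    obtain ⟨f, -, rfl⟩ := h
    simp
  · rintro rfl
    simp only [listsLen, Finset.mem_image]
    exact ⟨fun i => w.get (Fin.cast (by simp) i), Finset.mem_univ _, by
      have := List.ofFn_get w
      simpa using this⟩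

lemma card_listsLen (n : ℕ) : (listsLen n).card = 2 ^ n := by
  rw [listsLen, Finset.card_image_of_injective _ List.ofFn_injective]
  simp

/-- finite Kraft inequality -/
lemma kraft_finset (F : Finset (List Bool))
    (hpf : ∀ u ∈ F, ∀ v, u ++ v ∈ F → v = []) (n : ℕ) (hn : ∀ w ∈ F, w.length ≤ n) :
    ∑ w ∈ F, 2 ^ (n - w.length) ≤ 2 ^ n := by
  classical
  have hdisj : ∀ u ∈ F, ∀ v ∈ F, u ≠ v →
      Disjoint ((listsLen (n - u.length)).image (u ++ ·))
               ((listsLen (n - v.length)).image (v ++ ·)) := by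
    intro u hu v hv huv
    rw [Finset.disjoint_left]
    rintro a ha hb
    simp only [Finset.mem_image] at ha hb
    obtain ⟨p, hp, rfl⟩ := ha
    obtain ⟨q, hq, he⟩ := hb
    rcases le_total u.length v.length with hle | hle
    · have hpre : u <+: v := List.prefix_of_prefix_length_le ⟨p, rfl⟩ ⟨q, he⟩ hle
      obtain ⟨t, rfl⟩ := hpre
      exact huv (by rw [hpf u hu t hv]; simp)
    · have hpre : v <+: u := List.prefix_of_prefix_length_le ⟨q, he⟩ ⟨p, rfl⟩ hle
      obtain ⟨t, rfl⟩ := hpre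
      have : t = [] := hpf v hv t hu
      exact huv (by rw [this]; simp)
  have hsub : F.biUnion (fun w => (listsLen (n - w.length)).image (w ++ ·)) ⊆ listsLen n := by
    intro a ha
    simp only [Finset.mem_biUnion, Finset.mem_image] at ha
    obtain ⟨w, hw, p, hp, rfl⟩ := ha
    rw [mem_listsLen]
    rw [mem_listsLen] at hp
    have := hn w hw
    simp [hp]; omega
  calc ∑ w ∈ F, 2 ^ (n - w.length)
      = ∑ w ∈ F, ((listsLen (n - w.length)).image (w ++ ·)).card := by
        refine Finset.sum_congr rfl fun w hw => ?_
        rw [Finset.card_image_of_injective _ (fun a b h => by simpa using h),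
          card_listsLen]
    _ = (F.biUnion (fun w => (listsLen (n - w.length)).image (w ++ ·))).card := by
        rw [Finset.card_biUnion hdisj]
    _ ≤ (listsLen n).card := Finset.card_le_card hsub
    _ = 2 ^ n := card_listsLen n

/-- Kraft inequality for prefix-free sets in ENNReal -/
lemma kraft (S : Set (List Bool))
    (hpf : ∀ u ∈ S, ∀ v, u ++ v ∈ S → v = []) :
    ∑' w : List Bool, S.indicator wtE w ≤ 1 := by
  classical
  rw [ENNReal.tsum_eq_iSup_sum]
  refine iSup_le fun F => ?_
  have : ∑ w ∈ F, S.indicator wtE w = ∑ w ∈ F.filter (· ∈ S), wtE w := by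
    rw [Finset.sum_filter]
    refine Finset.sum_congr rfl fun w _ => ?_
    by_cases h : w ∈ S <;> simp [h, Set.indicator_apply]
  rw [this]
  set G := F.filter (· ∈ S) with hG
  have hGpf : ∀ u ∈ G, ∀ v, u ++ v ∈ G → v = [] := by
    intro u hu v hv
    simp only [hG, Finset.mem_filter] at hu hv
    exact hpf u hu.2 v hv.2
  set n := G.sup List.length with hn
  have hlen : ∀ w ∈ G, w.length ≤ n := fun w hw => Finset.le_sup hw
  have hkey := kraft_finset G hGpf n hlen
  have hmul : (2⁻¹ : ENNReal) * 2 = 1 := by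
    rw [ENNReal.inv_mul_cancel] <;> norm_num
  have hsum : ∑ w ∈ G, wtE w = 2⁻¹ ^ n * ∑ w ∈ G, (2 : ENNReal) ^ (n - w.length) := by
    rw [Finset.mul_sum]
    refine Finset.sum_congr rfl fun w hw => ?_
    have hl : n = w.length + (n - w.length) := by
      have := hlen w hw; omega
    calc wtE w = 2⁻¹ ^ w.length * ((2⁻¹ * 2) ^ (n - w.length)) := by
          rw [hmul]; simp [wtE]
      _ = 2⁻¹ ^ n * 2 ^ (n - w.length) := by
          rw [mul_pow, ← mul_assoc, ← pow_add, ← hl]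
  rw [hsum]
  have hcast : ∑ w ∈ G, (2 : ENNReal) ^ (n - w.length) ≤ 2 ^ n := by
    calc ∑ w ∈ G, (2 : ENNReal) ^ (n - w.length)
        = ((∑ w ∈ G, 2 ^ (n - w.length) : ℕ) : ENNReal) := by push_cast; ring
      _ ≤ ((2 ^ n : ℕ) : ENNReal) := by exact_mod_cast Nat.cast_le.mpr hkey
      _ = 2 ^ n := by push_cast; ring
  calc 2⁻¹ ^ n * ∑ w ∈ G, (2 : ENNReal) ^ (n - w.length) ≤ 2⁻¹ ^ n * 2 ^ n :=
        mul_le_mul_right hcast _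
    _ = (2⁻¹ * 2) ^ n := by rw [mul_pow]
    _ = 1 := by rw [hmul, one_pow]



noncomputable def probE (N : ℕ) (x : ℤ) (S : Set (List Bool)) : ENNReal :=
  ∑' w : List Bool, Set.indicator {w | IsExitPath N x w ∧ w ∈ S} wtE w

lemma exit_prefix_free (N : ℕ) (x : ℤ) :
    ∀ u, IsExitPath N x u → ∀ v, IsExitPath N x (u ++ v) → v = [] := by
  intro u hu v huv
  by_contra hv
  have hlen : u.length < (u ++ v).length := by
    simp [List.length_append]
    exact List.length_pos_iff.mpr hv
  have h1 := huv.1 u.length hlen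
  rw [List.take_append, Nat.sub_self, List.take_zero,
    List.append_nil, List.take_length] at h1
  rcases hu.2 with h | h <;> rw [h] at h1 <;> omega

lemma probE_le_one (N : ℕ) (x : ℤ) (S : Set (List Bool)) : probE N x S ≤ 1 := by
  classical
  refine le_trans ?_ (kraft {w | IsExitPath N x w} (fun u hu v hv => exit_prefix_free N x u hu v hv))
  refine ENNReal.tsum_le_tsum fun w => ?_
  simp only [Set.indicator_apply, Set.mem_setOf_eq]
  split_ifs with h1 h2
  · exact le_refl _
  · exact absurd h1.1 h2
  · exact zero_le
  · exact le_refl _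

lemma probE_ne_top (N : ℕ) (x : ℤ) (S : Set (List Bool)) : probE N x S ≠ ⊤ :=
  ne_top_of_le_ne_top ENNReal.one_ne_top (probE_le_one N x S)

lemma count_true_add_count_false (w : List Bool) : w.count true + w.count false = w.length := by
  induction w with
  | nil => simp
  | cons b t ih => cases b <;> simp [List.count_cons] <;> omega

lemma wt_half (w : List Bool) : wt (1/2) w = ((wtE w).toReal) := by
  rw [wt, wtE]
  have : ((2⁻¹ : ENNReal) ^ w.length).toReal = (1/2 : ℝ) ^ w.length := by
    rw [ENNReal.toReal_pow]
    norm_num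
  rw [this, ← count_true_add_count_false w, pow_add]
  norm_num

/-- Bridge: the real probability equals `toReal` of the `ENNReal` one. -/
lemma prob_eq (N : ℕ) (x : ℤ) (S : List Bool → Prop) :
    prob N (1/2) x S = (probE N x {w | S w}).toReal := by
  classical
  rw [prob, probE, ENNReal.tsum_toReal_eq]
  · refine tsum_congr fun w => ?_
    simp only [Set.indicator_apply, Set.mem_setOf_eq]
    split_ifs with h
    · exact wt_half w
    · simp
  · intro w
    simp only [Set.indicator_apply, Set.mem_setOf_eq]
    split_ifs with h
    · exact wtE_ne_top w
    · exact ENNReal.zero_ne_top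

lemma probE_mono (N : ℕ) (x : ℤ) {S T : Set (List Bool)} (h : S ⊆ T) :
    probE N x S ≤ probE N x T := by
  classical
  refine ENNReal.tsum_le_tsum fun w => ?_
  simp only [Set.indicator_apply, Set.mem_setOf_eq]
  split_ifs with h1 h2
  · exact le_refl _
  · exact absurd ⟨h1.1, h h1.2⟩ h2
  · exact zero_le
  · exact le_refl _

lemma probE_congr (N : ℕ) (x : ℤ) {S T : Set (List Bool)}
    (h : ∀ w, IsExitPath N x w → (w ∈ S ↔ w ∈ T)) : probE N x S = probE N x T := by
  classical
  refine tsum_congr fun w => ?_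
  simp only [Set.indicator_apply, Set.mem_setOf_eq]
  by_cases hw : IsExitPath N x w
  · split_ifs with h1 h2 h2
    · rfl
    · exact absurd ⟨hw, (h w hw).mp h1.2⟩ h2
    · exact absurd ⟨hw, (h w hw).mpr h2.2⟩ h1
    · rfl
  · split_ifs with h1 h2 h2
    · exact absurd h1.1 hw
    · exact absurd h1.1 hw
    · exact absurd h2.1 hw
    · rfl

lemma probE_union (N : ℕ) (x : ℤ) {S T : Set (List Bool)} (h : ∀ w, ¬(w ∈ S ∧ w ∈ T)) :
    probE N x (S ∪ T) = probE N x S + probE N x T := by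
  classical
  rw [probE, probE, probE, ← ENNReal.tsum_add]
  refine tsum_congr fun w => ?_
  simp only [Set.indicator_apply, Set.mem_setOf_eq, Set.mem_union]
  by_cases hw : IsExitPath N x w
  · by_cases hs : w ∈ S
    · rw [if_pos ⟨hw, Or.inl hs⟩, if_pos ⟨hw, hs⟩, if_neg (fun c => h w ⟨hs, c.2⟩), add_zero]
    · by_cases ht : w ∈ T
      · rw [if_pos ⟨hw, Or.inr ht⟩, if_neg (fun c => hs c.2), if_pos ⟨hw, ht⟩, zero_add]
      · rw [if_neg (fun c => c.2.elim hs ht), if_neg (fun c => hs c.2),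
          if_neg (fun c => ht c.2), add_zero]
  · rw [if_neg (fun c => hw c.1), if_neg (fun c => hw c.1), if_neg (fun c => hw c.1), add_zero]

lemma exit_cons_iff (N : ℕ) (x : ℤ) (hx0 : 0 < x) (hxN : x < N) (b : Bool) (w : List Bool) :
    IsExitPath N x (b :: w) ↔ IsExitPath N (x + if b then 1 else -1) w := by
  have htake : ∀ k : ℕ, (b :: w).take (k + 1) = b :: w.take k := fun k => rfl
  constructor
  · rintro ⟨hin, hend⟩
    refine ⟨fun k hk => ?_, ?_⟩
    · have := hin (k + 1) (by simpa using Nat.succ_lt_succ hk)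
      rwa [htake, walkPos_cons] at this
    · rwa [walkPos_cons] at hend
  · rintro ⟨hin, hend⟩
    refine ⟨fun k hk => ?_, ?_⟩
    · match k with
      | 0 => simpa [walkPos_nil] using ⟨hx0, hxN⟩
      | k + 1 =>
        rw [htake, walkPos_cons]
        exact hin k (by simpa using Nat.lt_of_succ_lt_succ hk)
    · rw [walkPos_cons]; exact hend

lemma exit_nonempty (N : ℕ) (x : ℤ) (hx0 : 0 < x) (hxN : x < N) :
    ¬ IsExitPath N x [] := by
  rintro ⟨-, h | h⟩ <;> rw [walkPos_nil] at h <;> omega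

/-- first-step decomposition -/
lemma probE_rec (N : ℕ) (x : ℤ) (hx0 : 0 < x) (hxN : x < N) (S : Set (List Bool)) :
    probE N x S =
      2⁻¹ * probE N (x + 1) {w | true :: w ∈ S} +
      2⁻¹ * probE N (x - 1) {w | false :: w ∈ S} := by
  classical
  rw [probE]
  set f : List Bool → ENNReal := fun w => Set.indicator {w | IsExitPath N x w ∧ w ∈ S} wtE w
    with hf
  have hinj : Function.Injective (fun p : Bool × List Bool => p.1 :: p.2) := by
    rintro ⟨a, u⟩ ⟨b, v⟩ h
    simpa using h
  have hsupp : Function.support f ⊆ Set.range (fun p : Bool × List Bool => p.1 :: p.2) := by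
    intro w hw
    match w with
    | [] =>
      exfalso
      apply hw
      rw [hf]
      exact Set.indicator_of_notMem (fun c => exit_nonempty N x hx0 hxN c.1) _
    | b :: t => exact ⟨(b, t), rfl⟩
  rw [← Function.Injective.tsum_eq hinj hsupp]
  have key : ∀ b : Bool, ∀ w : List Bool,
      f (b :: w) = 2⁻¹ *
        Set.indicator {w | IsExitPath N (x + if b then 1 else -1) w ∧
          w ∈ {w | (b :: w) ∈ S}} wtE w := by
    intro b w
    rw [hf]
    cases b <;>
    · simp only [Set.indicator_apply, Set.mem_setOf_eq, exit_cons_iff N x hx0 hxN,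
        if_true, Bool.false_eq_true, if_false]
      split_ifs with h
      · rw [wtE_cons]
      · rw [mul_zero]
  calc ∑' p : Bool × List Bool, f (p.1 :: p.2)
      = ∑' b : Bool, ∑' w : List Bool, f (b :: w) := ENNReal.tsum_prod (f := fun b w => f (b :: w))
    _ = (∑' w : List Bool, f (false :: w)) + (∑' w : List Bool, f (true :: w)) := by
        rw [tsum_bool]
    _ = 2⁻¹ * probE N (x + -1) {w | false :: w ∈ S} +
        2⁻¹ * probE N (x + 1) {w | true :: w ∈ S} := by
        simp only [key]
        rw [ENNReal.tsum_mul_left, ENNReal.tsum_mul_left]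
        rfl
    _ = _ := by
        have h1 : x + -1 = x - 1 := by ring
        rw [h1, add_comm]
  
open scoped Classical in
lemma probE_boundary_zero (N : ℕ) (S : Set (List Bool)) :
    probE N 0 S = if [] ∈ S then 1 else 0 := by
  classical
  rw [probE]
  rw [tsum_eq_single []]
  · simp only [Set.indicator_apply, Set.mem_setOf_eq]
    have hex : IsExitPath N 0 [] := ⟨by simp, Or.inl (walkPos_nil 0)⟩
    by_cases hS : [] ∈ S
    · rw [if_pos ⟨hex, hS⟩, if_pos hS, wtE_nil]
    · rw [if_neg (fun c => hS c.2), if_neg hS]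
  · intro w hw
    refine Set.indicator_of_notMem (fun c => ?_) _
    have := c.1.1 0 (by simpa using List.length_pos_iff.mpr hw)
    rw [List.take_zero, walkPos_nil] at this
    omega

open scoped Classical in
lemma probE_boundary_N (N : ℕ) (S : Set (List Bool)) :
    probE N (N : ℤ) S = if [] ∈ S then 1 else 0 := by
  classical
  rw [probE]
  rw [tsum_eq_single []]
  · simp only [Set.indicator_apply, Set.mem_setOf_eq]
    have hex : IsExitPath N (N : ℤ) [] := ⟨by simp, Or.inr (walkPos_nil N)⟩
    by_cases hS : [] ∈ S
    · rw [if_pos ⟨hex, hS⟩, if_pos hS, wtE_nil]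
    · rw [if_neg (fun c => hS c.2), if_neg hS]
  · intro w hw
    refine Set.indicator_of_notMem (fun c => ?_) _
    have := c.1.1 0 (by simpa using List.length_pos_iff.mpr hw)
    rw [List.take_zero, walkPos_nil] at this
    omega

/-- linear recurrence solver -/
lemma lin_solve (f : ℕ → ℝ) (N : ℕ)
    (hrec : ∀ n, 0 < n → n < N → f n = (f (n + 1) + f (n - 1)) / 2) :
    ∀ n ≤ N, f n = f 0 + n * (f 1 - f 0) := by
  have hdiff : ∀ n, n + 1 ≤ N → f (n + 1) - f n = f 1 - f 0 := by
    intro n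
    induction n with
    | zero => intro _; ring
    | succ m ih =>
      intro h
      have h1 := hrec (m + 1) (Nat.succ_pos m) (by omega)
      have h2 := ih (by omega)
      simp only [Nat.add_sub_cancel] at h1
      have h3 : f (m + 1 + 1) - f (m + 1) = f (m + 1) - f m := by linarith
      rw [h3, h2]
  intro n hn
  induction n with
  | zero => ring
  | succ m ih =>
    have h1 := hdiff m hn
    have h2 := ih (by omega)
    push_cast
    rw [show f (m + 1) = f m + (f 1 - f 0) by linarith, h2]
    push_cast
    ring

lemma toReal_rec (N : ℕ) (x : ℤ) (hx0 : 0 < x) (hxN : x < N) (S : Set (List Bool)) :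
    (probE N x S).toReal =
      ((probE N (x + 1) {w | true :: w ∈ S}).toReal +
       (probE N (x - 1) {w | false :: w ∈ S}).toReal) / 2 := by
  rw [probE_rec N x hx0 hxN S, ENNReal.toReal_add, ENNReal.toReal_mul, ENNReal.toReal_mul]
  · simp [ENNReal.toReal_inv]
    ring
  · exact ENNReal.mul_ne_top (by simp) (probE_ne_top _ _ _)
  · exact ENNReal.mul_ne_top (by simp) (probE_ne_top _ _ _)

lemma hitN_val (N : ℕ) (hN : 0 < N) (n : ℕ) (hn : n ≤ N) :
    (probE N (n : ℤ) {w | walkPos (n : ℤ) w = (N : ℤ)}).toReal = (n : ℝ) / N := by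
  set f : ℕ → ℝ := fun m => (probE N (m : ℤ) {w | walkPos (m : ℤ) w = (N : ℤ)}).toReal with hf
  have hrec : ∀ m, 0 < m → m < N → f m = (f (m + 1) + f (m - 1)) / 2 := by
    intro m hm0 hmN
    have h := toReal_rec N (m : ℤ) (by exact_mod_cast hm0) (by exact_mod_cast hmN)
      {w | walkPos (m : ℤ) w = (N : ℤ)}
    have e1 : {w | true :: w ∈ {w | walkPos (m : ℤ) w = (N : ℤ)}} =
        {w | walkPos ((m : ℤ) + 1) w = (N : ℤ)} := by
      ext w; simp [walkPos_cons]
    have e2 : {w | false :: w ∈ {w | walkPos (m : ℤ) w = (N : ℤ)}} =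
        {w | walkPos ((m : ℤ) - 1) w = (N : ℤ)} := by
      ext w
      simp only [Set.mem_setOf_eq, walkPos_cons, Bool.false_eq_true, if_false]
      rw [show (m : ℤ) + -1 = (m : ℤ) - 1 by ring]
    have c1 : (m : ℤ) + 1 = ((m + 1 : ℕ) : ℤ) := by push_cast; ring
    have c2 : (m : ℤ) - 1 = ((m - 1 : ℕ) : ℤ) := by
      have : (1 : ℕ) ≤ m := hm0
      push_cast [Nat.cast_sub this]; ring
    rw [e1, e2, c1, c2] at h
    exact h
  have hlin := lin_solve f N hrec
  have h0 : f 0 = 0 := by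
    rw [hf]
    simp only [Nat.cast_zero, probE_boundary_zero]
    rw [if_neg]
    · simp
    · simp only [Set.mem_setOf_eq, walkPos_nil]
      intro c
      omega
  have hNval : f N = 1 := by
    rw [hf]
    simp only [probE_boundary_N]
    rw [if_pos]
    · simp
    · simp only [Set.mem_setOf_eq, walkPos_nil]
  have hfn := hlin N (le_refl N)
  rw [h0, hNval] at hfn
  have hNne : (N : ℝ) ≠ 0 := Nat.cast_ne_zero.mpr hN.ne'
  have hf1 : f 1 = 1 / N := by
    field_simp at hfn ⊢
    linarith [hfn]
  have hh := hlin n hn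
  rw [h0, hf1] at hh
  show f n = (n : ℝ) / N
  rw [hh]
  field_simp
  ring

lemma total_val (N : ℕ) (hN : 0 < N) (n : ℕ) (hn : n ≤ N) :
    probE N (n : ℤ) Set.univ = 1 := by
  set f : ℕ → ℝ := fun m => (probE N (m : ℤ) Set.univ).toReal with hf
  have hrec : ∀ m, 0 < m → m < N → f m = (f (m + 1) + f (m - 1)) / 2 := by
    intro m hm0 hmN
    have h := toReal_rec N (m : ℤ) (by exact_mod_cast hm0) (by exact_mod_cast hmN) Set.univ
    have e1 : {w | true :: w ∈ (Set.univ : Set (List Bool))} = Set.univ := by ext w; simp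
    have e2 : {w | false :: w ∈ (Set.univ : Set (List Bool))} = Set.univ := by ext w; simp
    have c1 : (m : ℤ) + 1 = ((m + 1 : ℕ) : ℤ) := by push_cast; ring
    have c2 : (m : ℤ) - 1 = ((m - 1 : ℕ) : ℤ) := by
      have : (1 : ℕ) ≤ m := hm0
      push_cast [Nat.cast_sub this]; ring
    rw [e1, e2, c1, c2] at h
    exact h
  have hlin := lin_solve f N hrec
  have h0 : f 0 = 1 := by
    rw [hf]; simp only [Nat.cast_zero, probE_boundary_zero, if_pos (Set.mem_univ _)]; simp
  have hNval : f N = 1 := by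
    rw [hf]; simp only [probE_boundary_N, if_pos (Set.mem_univ _)]; simp
  have hfn := hlin N (le_refl N)
  rw [h0, hNval] at hfn
  have hNne : (N : ℝ) ≠ 0 := Nat.cast_ne_zero.mpr hN.ne'
  have hf1 : f 1 = 1 := by
    have : (N : ℝ) * (f 1 - 1) = 0 := by linarith
    rcases mul_eq_zero.mp this with h | h
    · exact absurd h hNne
    · linarith
  have hfin := hlin n hn
  rw [h0, hf1] at hfin
  have hone : f n = 1 := by rw [hfin]; ring
  exact (ENNReal.toReal_eq_one_iff _).mp hone

lemma hit0_val (N : ℕ) (hN : 0 < N) (n : ℕ) (hn : n ≤ N) :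
    (probE N (n : ℤ) {w | walkPos (n : ℤ) w = 0}).toReal = ((N : ℝ) - n) / N := by
  have hsplit : probE N (n : ℤ) Set.univ =
      probE N (n : ℤ) {w | walkPos (n : ℤ) w = 0} +
      probE N (n : ℤ) {w | walkPos (n : ℤ) w = (N : ℤ)} := by
    rw [← probE_union]
    · refine probE_congr _ _ fun w hw => ?_
      simp only [Set.mem_univ, true_iff, Set.mem_union, Set.mem_setOf_eq]
      exact hw.2
    · rintro w ⟨h1, h2⟩
      simp only [Set.mem_setOf_eq] at h1 h2
      rw [h1] at h2
      omega
  have := congrArg ENNReal.toReal hsplit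
  rw [total_val N hN n hn, ENNReal.toReal_add (probE_ne_top _ _ _) (probE_ne_top _ _ _),
    hitN_val N hN n hn] at this
  simp at this
  have hNne : (N : ℝ) ≠ 0 := Nat.cast_ne_zero.mpr hN.ne'
  have hgoal : (probE N (n : ℤ) {w | walkPos (n : ℤ) w = 0}).toReal = 1 - (n : ℝ) / N := by
    linarith
  rw [hgoal]
  field_simp

lemma pos_appendL (x : ℤ) (u v : List Bool) {k : ℕ} (hk : k ≤ u.length) :
    walkPos x ((u ++ v).take k) = walkPos x (u.take k) := by
  rw [List.take_append, Nat.sub_eq_zero_of_le hk, List.take_zero,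
    List.append_nil]

lemma pos_appendR (x : ℤ) (u v : List Bool) (j : ℕ) :
    walkPos x ((u ++ v).take (u.length + j)) = walkPos (walkPos x u) (v.take j) := by
  rw [List.take_add, walkPos_append]
  congr 1
  · congr 1
    rw [List.take_append, Nat.sub_self, List.take_zero, List.append_nil,
      List.take_length]
  · congr 1
    rw [List.drop_append, Nat.sub_self, List.drop_zero, List.drop_length,
      List.nil_append]

/-- well-definedness of concatenation -/
lemma concat_exit {N b : ℕ} {x : ℤ} (hx0 : 0 < x) (hxb : x < b) (hbN : b < N)
    {u v : List Bool} (hu : IsExitPath b x u) (hue : walkPos x u = (b : ℤ))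
    (hv : IsExitPath N (b : ℤ) v) (hve : walkPos (b : ℤ) v = 0) :
    IsExitPath N x (u ++ v) ∧ walkPos x (u ++ v) = 0 ∧
      walkPos x ((u ++ v).take u.length) = (b : ℤ) ∧
      (∀ k, walkPos x ((u ++ v).take k) = (b : ℤ) → u.length ≤ k) := by
  have hvne : v ≠ [] := by
    rintro rfl
    rw [walkPos_nil] at hve
    omega
  have hlen : (u ++ v).length = u.length + v.length := by simp
  have hposu : walkPos x ((u ++ v).take u.length) = (b : ℤ) := by
    rw [pos_appendL x u v (le_refl _), List.take_length, hue]
  have hin : ∀ k < (u ++ v).length,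
      0 < walkPos x ((u ++ v).take k) ∧ walkPos x ((u ++ v).take k) < (N : ℤ) := by
    intro k hk
    rcases lt_or_ge k u.length with h | h
    · rw [pos_appendL x u v h.le]
      have := hu.1 k h
      constructor
      · exact this.1
      · exact lt_trans this.2 (by exact_mod_cast hbN)
    · obtain ⟨j, rfl⟩ := Nat.exists_eq_add_of_le h
      rw [pos_appendR, hue]
      rcases Nat.eq_zero_or_pos j with rfl | hj
      · rw [List.take_zero, walkPos_nil]
        constructor
        · exact_mod_cast lt_trans hx0 hxb
        · exact_mod_cast hbN
      · exact hv.1 j (by rw [hlen] at hk; omega)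
  have hend : walkPos x (u ++ v) = 0 := by
    rw [walkPos_append, hue, hve]
  refine ⟨⟨hin, Or.inl hend⟩, hend, hposu, ?_⟩
  intro k hkb
  by_contra hlt
  push_neg at hlt
  rw [pos_appendL x u v hlt.le] at hkb
  have := hu.1 k hlt
  omega

/-- decomposition at the first hitting time of b -/
lemma probE_decomp (N b : ℕ) (x : ℤ) (hx0 : 0 < x) (hxb : x < b) (hbN : b < N) :
    probE N x {w | walkPos x w = 0 ∧ ∃ k, walkPos x (w.take k) = (b : ℤ)} =
    probE b x {w | walkPos x w = (b : ℤ)} * probE N (b : ℤ) {w | walkPos (b : ℤ) w = 0} := by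
  classical
  set A : Set (List Bool) := {u | IsExitPath b x u ∧ walkPos x u = (b : ℤ)} with hA
  set B : Set (List Bool) := {v | IsExitPath N (b : ℤ) v ∧ walkPos (b : ℤ) v = 0} with hB
  set g : List Bool × List Bool → ENNReal :=
    fun p => (A.indicator wtE p.1) * (B.indicator wtE p.2) with hg
  set f : List Bool → ENNReal :=
    fun w => Set.indicator {w | IsExitPath N x w ∧
      w ∈ {w | walkPos x w = 0 ∧ ∃ k, walkPos x (w.take k) = (b : ℤ)}} wtE w with hf
  have hsupp_g : ∀ p : List Bool × List Bool, p ∈ Function.support g ↔ p.1 ∈ A ∧ p.2 ∈ B := by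
    intro p
    rw [Function.mem_support, hg]
    show A.indicator wtE p.1 * B.indicator wtE p.2 ≠ 0 ↔ p.1 ∈ A ∧ p.2 ∈ B
    constructor
    · intro h
      by_cases h1 : p.1 ∈ A
      · by_cases h2 : p.2 ∈ B
        · exact ⟨h1, h2⟩
        · exact absurd (by rw [Set.indicator_of_notMem h2, mul_zero]) h
      · exact absurd (by rw [Set.indicator_of_notMem h1, zero_mul]) h
    · rintro ⟨h1, h2⟩
      rw [Set.indicator_of_mem h1, Set.indicator_of_mem h2]
      exact mul_ne_zero (wtE_ne_zero _) (wtE_ne_zero _)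
  have key : probE N x {w | walkPos x w = 0 ∧ ∃ k, walkPos x (w.take k) = (b : ℤ)} =
      ∑' p : List Bool × List Bool, g p := by
    rw [probE]
    refine tsum_eq_tsum_of_ne_zero_bij (fun p => (p : List Bool × List Bool).1 ++ p.1.2) ?_ ?_ ?_
    · -- injectivity
      rintro ⟨⟨u, v⟩, hp⟩ ⟨⟨u', v'⟩, hp'⟩ he
      simp only [hsupp_g] at hp hp'
      simp only at he
      obtain ⟨hu, hue⟩ := hp.1
      obtain ⟨hv, hve⟩ := hp.2
      obtain ⟨hu', hue'⟩ := hp'.1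
      obtain ⟨hv', hve'⟩ := hp'.2
      obtain ⟨-, -, hb1, hmin1⟩ := concat_exit hx0 hxb hbN hu hue hv hve
      obtain ⟨-, -, hb2, hmin2⟩ := concat_exit hx0 hxb hbN hu' hue' hv' hve'
      have hlen : u.length = u'.length := by
        have h1 := hmin1 u'.length (by rw [he]; exact hb2)
        have h2 := hmin2 u.length (by rw [← he]; exact hb1)
        omega
      have huu : u = u' := by
        have : (u ++ v).take u.length = (u' ++ v').take u'.length := by rw [he, hlen]
        rwa [List.take_append, Nat.sub_self, List.take_zero, List.append_nil,
          List.take_length, List.take_append, Nat.sub_self, List.take_zero,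
          List.append_nil, List.take_length] at this
      have hvv : v = v' := by
        rw [huu] at he
        exact List.append_cancel_left he
      simp [huu, hvv]
    · -- surjectivity onto support f
      intro w hw
      have hmem : w ∈ {w | IsExitPath N x w ∧
          w ∈ {w | walkPos x w = 0 ∧ ∃ k, walkPos x (List.take k w) = (b : ℤ)}} := by
        by_contra h
        exact hw (Set.indicator_of_notMem h _)
      obtain ⟨hex, hend, hhit⟩ := hmem
      have hhit' : ∃ k, walkPos x (w.take k) = (b : ℤ) := hhit
      classical
      let k0 := Nat.find hhit'
      have hk0 : walkPos x (w.take k0) = (b : ℤ) := Nat.find_spec hhit'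
      have hk0min : ∀ j < k0, walkPos x (w.take j) ≠ (b : ℤ) := fun j hj => Nat.find_min hhit' hj
      have hk0lt : k0 < w.length := by
        by_contra h
        push_neg at h
        rw [List.take_of_length_le h] at hk0
        rw [hend] at hk0
        have : (0 : ℤ) < b := by exact_mod_cast lt_trans hx0 hxb
        omega
      have hposlt : ∀ j < k0, walkPos x (w.take j) < (b : ℤ) := by
        intro j hj
        by_contra h
        push_neg at h
        obtain ⟨i, hi0, hij, hib⟩ := walk_ivt_up x w (Nat.zero_le j)
          (by rw [List.take_zero, walkPos_nil]; omega) h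
        exact hk0min i (lt_of_le_of_lt hij hj) hib
      have hlentake : (w.take k0).length = k0 := by
        rw [List.length_take]; omega
      have hAmem : w.take k0 ∈ A := by
        rw [hA]
        refine ⟨⟨fun j hj => ?_, Or.inr hk0⟩, hk0⟩
        rw [hlentake] at hj
        rw [List.take_take, min_eq_left hj.le]
        exact ⟨(hex.1 j (by omega)).1, hposlt j hj⟩
      have hlendrop : (w.drop k0).length = w.length - k0 := by simp
      have hposj : ∀ j, walkPos (b : ℤ) ((w.drop k0).take j) = walkPos x (w.take (k0 + j)) := by
        intro j
        rw [← hk0, ← walkPos_append, ← List.take_add]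
      have hend' : walkPos (b : ℤ) (w.drop k0) = 0 := by
        have h := hposj (w.length - k0)
        rw [List.take_of_length_le (le_of_eq hlendrop),
          show k0 + (w.length - k0) = w.length by omega,
          List.take_of_length_le (le_refl _)] at h
        rw [h, hend]
      have hBmem : w.drop k0 ∈ B := by
        rw [hB]
        refine ⟨⟨fun j hj => ?_, Or.inl hend'⟩, hend'⟩
        rw [hposj]
        rw [hlendrop] at hj
        exact hex.1 (k0 + j) (by omega)
      refine ⟨⟨(w.take k0, w.drop k0), ?_⟩, by simp⟩
      rw [hsupp_g]
      exact ⟨hAmem, hBmem⟩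
    · -- values agree
      rintro ⟨⟨u, v⟩, hp⟩
      simp only [hsupp_g] at hp
      obtain ⟨⟨hu, hue⟩, ⟨hv, hve⟩⟩ := hp
      obtain ⟨hexit, hend, hb1, -⟩ := concat_exit hx0 hxb hbN hu hue hv hve
      show Set.indicator {w | IsExitPath N x w ∧
          w ∈ {w | walkPos x w = 0 ∧ ∃ k, walkPos x (List.take k w) = (b : ℤ)}} wtE (u ++ v) =
        A.indicator wtE u * B.indicator wtE v
      have hmem1 : (u ++ v) ∈ {w | IsExitPath N x w ∧
          w ∈ {w | walkPos x w = 0 ∧ ∃ k, walkPos x (List.take k w) = (b : ℤ)}} :=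
        ⟨hexit, hend, u.length, hb1⟩
      have hmem2 : u ∈ A := by rw [hA]; exact ⟨hu, hue⟩
      have hmem3 : v ∈ B := by rw [hB]; exact ⟨hv, hve⟩
      rw [Set.indicator_of_mem hmem1, Set.indicator_of_mem hmem2,
        Set.indicator_of_mem hmem3, wtE_append]
  rw [key, ENNReal.tsum_prod (f := fun u v => (A.indicator wtE u) * (B.indicator wtE v))]
  rw [probE, probE]
  calc ∑' (u : List Bool) (v : List Bool), (A.indicator wtE u) * (B.indicator wtE v)
      = ∑' (u : List Bool), (A.indicator wtE u) * ∑' (v : List Bool), B.indicator wtE v := by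
        refine tsum_congr fun u => ?_
        rw [ENNReal.tsum_mul_left]
    _ = (∑' (u : List Bool), A.indicator wtE u) * ∑' (v : List Bool), B.indicator wtE v := by
        rw [ENNReal.tsum_mul_right]
    _ = _ := by rw [hA, hB]; rfl

lemma walkPos_reflect (c x : ℤ) (u : List Bool) :
    walkPos (c - x) (u.map not) = c - walkPos x u := by
  rw [walkPos_map_not]
  simp only [walkPos]
  ring

lemma exit_reflect (N : ℕ) (x : ℤ) (w : List Bool) :
    IsExitPath N ((N : ℤ) - x) (w.map not) ↔ IsExitPath N x w := by
  have hpos : ∀ k, walkPos ((N : ℤ) - x) ((w.map not).take k) =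
      (N : ℤ) - walkPos x (w.take k) := by
    intro k
    rw [← List.map_take, walkPos_reflect]
  constructor
  · rintro ⟨hin, hend⟩
    refine ⟨fun k hk => ?_, ?_⟩
    · have := hin k (by simpa using hk)
      rw [hpos] at this
      omega
    · have : walkPos ((N : ℤ) - x) (w.map not) = (N : ℤ) - walkPos x w := by
        rw [← List.take_length (l := w.map not), hpos, List.length_map, List.take_length]
      rw [this] at hend
      omega
  · rintro ⟨hin, hend⟩
    refine ⟨fun k hk => ?_, ?_⟩
    · rw [hpos]
      have := hin k (by simpa using hk)
      omega
    · have : walkPos ((N : ℤ) - x) (w.map not) = (N : ℤ) - walkPos x w := by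
        rw [← List.take_length (l := w.map not), hpos, List.length_map, List.take_length]
      rw [this]
      omega

lemma probE_reflect (N : ℕ) (x : ℤ) (S : Set (List Bool)) :
    probE N x S = probE N ((N : ℤ) - x) {w | w.map not ∈ S} := by
  classical
  rw [probE, probE]
  have hinv : Function.Involutive (fun w : List Bool => w.map not) := by
    intro w
    simp only [List.map_map]
    have hc : (not ∘ not) = id := funext fun b => by cases b <;> rfl
    rw [hc, List.map_id]
  let e : List Bool ≃ List Bool := hinv.toPerm _
  rw [← Equiv.tsum_eq e (fun w => Set.indicator {w | IsExitPath N x w ∧ w ∈ S} wtE w)]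
  refine tsum_congr fun w => ?_
  have he : e w = w.map not := rfl
  rw [he]
  simp only [Set.indicator_apply, Set.mem_setOf_eq]
  have hiff : IsExitPath N x (w.map not) ↔ IsExitPath N ((N : ℤ) - x) w := by
    have h := exit_reflect N ((N : ℤ) - x) w
    rwa [show (N : ℤ) - ((N : ℤ) - x) = x by ring] at h
  rw [if_congr (and_congr hiff Iff.rfl) rfl rfl]
  have hlen : wtE (w.map not) = wtE w := by rw [wtE, wtE, List.length_map]
  split_ifs with h
  · exact hlen
  · rfl



lemma mem_rangeSet {x y : ℤ} {w : List Bool} :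
    y ∈ rangeSet x w ↔ ∃ k, k ≤ w.length ∧ walkPos x (w.take k) = y := by
  simp only [rangeSet, Finset.mem_image, Finset.mem_range]
  constructor
  · rintro ⟨k, hk, rfl⟩
    exact ⟨k, by omega, rfl⟩
  · rintro ⟨k, hk, rfl⟩
    exact ⟨k, by omega, rfl⟩

lemma rangeSet_nonempty (x : ℤ) (w : List Bool) : (rangeSet x w).Nonempty :=
  ⟨x, mem_rangeSet.mpr ⟨0, Nat.zero_le _, by rw [List.take_zero, walkPos_nil]⟩⟩

lemma rangeSet_eq_Icc (x : ℤ) (w : List Bool) :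
    rangeSet x w = Finset.Icc ((rangeSet x w).min' (rangeSet_nonempty x w))
      ((rangeSet x w).max' (rangeSet_nonempty x w)) := by
  set F := rangeSet x w with hF
  set m := F.min' (rangeSet_nonempty x w) with hm
  set M := F.max' (rangeSet_nonempty x w) with hM
  apply Finset.Subset.antisymm
  · intro y hy
    rw [Finset.mem_Icc]
    exact ⟨Finset.min'_le F y hy, Finset.le_max' F y hy⟩
  · intro y hy
    rw [Finset.mem_Icc] at hy
    obtain ⟨km, hkm, hkmv⟩ := mem_rangeSet.mp (Finset.min'_mem F (rangeSet_nonempty x w))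
    obtain ⟨kM, hkM, hkMv⟩ := mem_rangeSet.mp (Finset.max'_mem F (rangeSet_nonempty x w))
    rcases le_total km kM with h | h
    · obtain ⟨k, hk1, hk2, hk3⟩ := walk_ivt_up x w (y := y) h (by rw [hkmv]; exact hy.1)
        (by rw [hkMv]; exact hy.2)
      exact mem_rangeSet.mpr ⟨k, le_trans hk2 hkM, hk3⟩
    · obtain ⟨k, hk1, hk2, hk3⟩ := walk_ivt_down x w (y := y) h (by rw [hkMv]; exact hy.2)
        (by rw [hkmv]; exact hy.1)
      exact mem_rangeSet.mpr ⟨k, le_trans hk2 hkm, hk3⟩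

lemma rangeCount_eq (x : ℤ) (w : List Bool) :
    (rangeCount x w : ℤ) = (rangeSet x w).max' (rangeSet_nonempty x w) -
      (rangeSet x w).min' (rangeSet_nonempty x w) + 1 := by
  have hmM : (rangeSet x w).min' (rangeSet_nonempty x w) ≤
      (rangeSet x w).max' (rangeSet_nonempty x w) :=
    Finset.min'_le _ _ (Finset.max'_mem _ _)
  rw [rangeCount]
  conv_lhs => rw [rangeSet_eq_Icc x w]
  rw [Int.card_Icc]
  omega

/-- key event equivalence -/
lemma range_event (N : ℕ) (hN : 0 < N) (x : ℤ) (hx0 : 0 < x) (hxN : x < (N : ℤ))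
    (w : List Bool) (hw : IsExitPath N x w) (b : ℕ) :
    ((b : ℤ) + 1 ≤ (rangeCount x w : ℤ)) ↔
      ((walkPos x w = 0 ∧ ∃ k, walkPos x (w.take k) = (b : ℤ)) ∨
       (walkPos x w = (N : ℤ) ∧ ∃ k, walkPos x (w.take k) = (N : ℤ) - (b : ℤ))) := by
  set F := rangeSet x w with hF
  have hne := rangeSet_nonempty x w
  set m := F.min' hne with hm
  set M := F.max' hne with hM
  have hcard : (rangeCount x w : ℤ) = M - m + 1 := rangeCount_eq x w
  have hx_mem : x ∈ F := mem_rangeSet.mpr ⟨0, Nat.zero_le _, by rw [List.take_zero, walkPos_nil]⟩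
  have hend_mem : walkPos x w ∈ F :=
    mem_rangeSet.mpr ⟨w.length, le_refl _, by rw [List.take_of_length_le (le_refl _)]⟩
  have hbound : ∀ y ∈ F, 0 ≤ y ∧ y ≤ (N : ℤ) := by
    intro y hy
    obtain ⟨k, hk, rfl⟩ := mem_rangeSet.mp hy
    rcases lt_or_eq_of_le hk with h | h
    · have := hw.1 k h
      omega
    · rw [h, List.take_of_length_le (le_refl _)]
      rcases hw.2 with he | he <;> rw [he] <;> omega
  rcases hw.2 with hend | hend
  · -- exits at 0
    have hm0 : m = 0 := by
      have h0 : (0 : ℤ) ∈ F := by rw [← hend]; exact hend_mem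
      have := Finset.min'_le F 0 h0
      have hge := (hbound m (Finset.min'_mem F hne)).1
      omega
    have hMx : x ≤ M := Finset.le_max' F x hx_mem
    constructor
    · intro hR
      left
      refine ⟨hend, ?_⟩
      have hbM : (b : ℤ) ≤ M := by omega
      obtain ⟨kM, hkM, hkMv⟩ := mem_rangeSet.mp (Finset.max'_mem F hne)
      rcases le_total (b : ℤ) x with hbx | hbx
      · obtain ⟨k, -, -, hk3⟩ := walk_ivt_down x w (y := (b : ℤ)) (Nat.zero_le w.length)
          (by rw [List.take_zero, walkPos_nil]; exact hbx)
          (by rw [List.take_of_length_le (le_refl _), hend]; positivity)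
        exact ⟨k, hk3⟩
      · obtain ⟨k, -, -, hk3⟩ := walk_ivt_up x w (y := (b : ℤ)) (Nat.zero_le kM)
          (by rw [List.take_zero, walkPos_nil]; exact hbx)
          (by rw [hkMv]; exact hbM)
        exact ⟨k, hk3⟩
    · intro h
      rcases h with ⟨-, k, hk⟩ | ⟨hcontra, -⟩
      · rcases le_or_gt k w.length with hkl | hkl
        · have : (b : ℤ) ∈ F := mem_rangeSet.mpr ⟨k, hkl, hk⟩
          have := Finset.le_max' F _ this
          omega
        · rw [List.take_of_length_le hkl.le, hend] at hk
          omega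
      · rw [hend] at hcontra
        omega
  · -- exits at N
    have hMN : M = (N : ℤ) := by
      have hNmem : (N : ℤ) ∈ F := by rw [← hend]; exact hend_mem
      have := Finset.le_max' F _ hNmem
      have hle := (hbound M (Finset.max'_mem F hne)).2
      omega
    have hmx : m ≤ x := Finset.min'_le F x hx_mem
    constructor
    · intro hR
      right
      refine ⟨hend, ?_⟩
      have hbm : m ≤ (N : ℤ) - b := by omega
      obtain ⟨km, hkm, hkmv⟩ := mem_rangeSet.mp (Finset.min'_mem F hne)
      rcases le_total x ((N : ℤ) - b) with hbx | hbx
      · obtain ⟨k, -, -, hk3⟩ := walk_ivt_up x w (y := (N : ℤ) - b) (Nat.zero_le w.length)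
          (by rw [List.take_zero, walkPos_nil]; exact hbx)
          (by rw [List.take_of_length_le (le_refl _), hend]; omega)
        exact ⟨k, hk3⟩
      · obtain ⟨k, -, -, hk3⟩ := walk_ivt_down x w (y := (N : ℤ) - b) (Nat.zero_le km)
          (by rw [List.take_zero, walkPos_nil]; exact hbx)
          (by rw [hkmv]; exact hbm)
        exact ⟨k, hk3⟩
    · intro h
      rcases h with ⟨hcontra, -⟩ | ⟨-, k, hk⟩
      · rw [hend] at hcontra
        omega
      · rcases le_or_gt k w.length with hkl | hkl
        · have : (N : ℤ) - b ∈ F := mem_rangeSet.mpr ⟨k, hkl, hk⟩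
          have := Finset.min'_le F _ this
          omega
        · rw [List.take_of_length_le hkl.le, hend] at hk
          have := Finset.min'_le F x hx_mem
          omega

/-- probability of (exit at 0 and max ≥ b), closed form -/
lemma term_formula (N b n : ℕ) (hn0 : 0 < n) (hnN : n < N) (hb0 : 0 < b) (hbN : b < N) :
    (probE N (n : ℤ) {w | walkPos (n : ℤ) w = 0 ∧
        ∃ k, walkPos (n : ℤ) (w.take k) = (b : ℤ)}).toReal =
      if b ≤ n then ((N : ℝ) - n) / N
      else ((n : ℝ) / b) * (((N : ℝ) - b) / N) := by
  split_ifs with h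
  · -- b ≤ n : hitting b is automatic on {exit at 0}
    have hcongr : probE N (n : ℤ) {w | walkPos (n : ℤ) w = 0 ∧
        ∃ k, walkPos (n : ℤ) (w.take k) = (b : ℤ)} =
        probE N (n : ℤ) {w | walkPos (n : ℤ) w = 0} := by
      refine probE_congr _ _ fun w hw => ?_
      simp only [Set.mem_setOf_eq]
      constructor
      · rintro ⟨h1, -⟩; exact h1
      · intro h1
        refine ⟨h1, ?_⟩
        obtain ⟨k, -, -, hk3⟩ := walk_ivt_down (n : ℤ) w (y := (b : ℤ)) (Nat.zero_le w.length)
          (by rw [List.take_zero, walkPos_nil]; exact_mod_cast h)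
          (by rw [List.take_of_length_le (le_refl _), h1]; positivity)
        exact ⟨k, hk3⟩
    rw [hcongr, hit0_val N (by omega) n hnN.le]
  · -- n < b : strong Markov decomposition
    push_neg at h
    rw [probE_decomp N b (n : ℤ) (by exact_mod_cast hn0) (by exact_mod_cast h) hbN,
      ENNReal.toReal_mul, hitN_val b hb0 n h.le, hit0_val N (by omega) b hbN.le]

/-- the full formula for `P(R ≥ b+1)` from an interior starting point -/
lemma main_formula (N n b : ℕ) (hn0 : 0 < n) (hnN : n < N) (hb0 : 0 < b) (hbN : b < N) :
    (probE N (n : ℤ) {w | (b : ℤ) + 1 ≤ (rangeCount (n : ℤ) w : ℤ)}).toReal =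
      (if b ≤ n then ((N : ℝ) - n) / N
       else ((n : ℝ) / b) * (((N : ℝ) - b) / N)) +
      (if b ≤ N - n then (n : ℝ) / N
       else (((N : ℝ) - n) / b) * (((N : ℝ) - b) / N)) := by
  have hN : 0 < N := by omega
  have hx0 : (0 : ℤ) < (n : ℤ) := by exact_mod_cast hn0
  have hxN : (n : ℤ) < (N : ℤ) := by exact_mod_cast hnN
  set E1 : Set (List Bool) := {w | walkPos (n : ℤ) w = 0 ∧
    ∃ k, walkPos (n : ℤ) (w.take k) = (b : ℤ)} with hE1
  set E2 : Set (List Bool) := {w | walkPos (n : ℤ) w = (N : ℤ) ∧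
    ∃ k, walkPos (n : ℤ) (w.take k) = (N : ℤ) - (b : ℤ)} with hE2
  have hsplit : probE N (n : ℤ) {w | (b : ℤ) + 1 ≤ (rangeCount (n : ℤ) w : ℤ)} =
      probE N (n : ℤ) E1 + probE N (n : ℤ) E2 := by
    rw [← probE_union]
    · refine probE_congr _ _ fun w hw => ?_
      have := range_event N hN (n : ℤ) hx0 hxN w hw b
      simpa [hE1, hE2, Set.mem_union, Set.mem_setOf_eq] using this
    · rintro w ⟨h1, h2⟩
      rw [hE1] at h1; rw [hE2] at h2
      have := h1.1
      have := h2.1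
      omega
  rw [hsplit, ENNReal.toReal_add (probE_ne_top _ _ _) (probE_ne_top _ _ _)]
  congr 1
  · rw [hE1, term_formula N b n hn0 hnN hb0 hbN]
  · -- reflection for the second term
    have hrefl : probE N (n : ℤ) E2 = probE N ((N : ℤ) - n) {w | w.map not ∈ E2} := by
      have := probE_reflect N (n : ℤ) E2
      rwa [show (N : ℤ) - (n : ℤ) = ((N : ℤ) - n) by ring] at this
    have hset : {w | w.map not ∈ E2} = {w | walkPos ((N : ℤ) - n) w = 0 ∧
        ∃ k, walkPos ((N : ℤ) - n) (w.take k) = (b : ℤ)} := by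
      ext w
      rw [hE2]
      simp only [Set.mem_setOf_eq]
      have hpos : ∀ u : List Bool, walkPos (n : ℤ) (u.map not) =
          (N : ℤ) - walkPos ((N : ℤ) - n) u := by
        intro u
        have := walkPos_reflect (N : ℤ) ((N : ℤ) - n) u
        rwa [show (N : ℤ) - ((N : ℤ) - n) = (n : ℤ) by ring] at this
      constructor
      · rintro ⟨h1, k, hk⟩
        rw [hpos] at h1
        rw [← List.map_take, hpos] at hk
        exact ⟨by omega, k, by omega⟩
      · rintro ⟨h1, k, hk⟩
        refine ⟨by rw [hpos]; omega, k, ?_⟩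
        rw [← List.map_take, hpos]
        omega
    have hcast : (N : ℤ) - (n : ℤ) = ((N - n : ℕ) : ℤ) := by
      push_cast [Nat.cast_sub hnN.le]; ring
    rw [hrefl, hset, hcast, term_formula N b (N - n) (by omega) (by omega) hb0 hbN]
    have c1 : ((N - n : ℕ) : ℝ) = (N : ℝ) - n := by
      push_cast [Nat.cast_sub hnN.le]; ring
    rw [c1]
    have c2 : (N : ℝ) - ((N : ℝ) - n) = (n : ℝ) := by ring
    rw [c2]

noncomputable def nfun (α : ℝ) (N : ℕ) : ℕ := (⌊α * N⌋).toNat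
noncomputable def bfun (β : ℝ) (N : ℕ) : ℕ := (⌈β * N⌉ - 1).toNat

/-- all basic numeric facts about `nfun` and `bfun`, valid for large N -/
lemma basic_facts (α β : ℝ) (hα0 : 0 < α) (hα1 : α < 1) (hβ0 : 0 < β) (hβ1 : β ≤ 1) :
    ∀ᶠ N : ℕ in Filter.atTop,
      0 < nfun α N ∧ nfun α N < N ∧ 0 < bfun β N ∧ bfun β N < N ∧
      (nfun α N : ℝ) ≤ α * N ∧ α * N - 1 < (nfun α N : ℝ) ∧
      (bfun β N : ℝ) < β * N ∧ β * N - 1 ≤ (bfun β N : ℝ) ∧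
      (⌊α * (N : ℝ)⌋ : ℤ) = ((nfun α N : ℕ) : ℤ) ∧
      ((bfun β N : ℕ) : ℤ) + 1 = ⌈β * (N : ℝ)⌉ ∧ 1 ≤ (N : ℝ) := by
  have hNat : Filter.Tendsto (fun N : ℕ => (N : ℝ)) Filter.atTop Filter.atTop :=
    tendsto_natCast_atTop_atTop
  have h1 : ∀ᶠ N : ℕ in Filter.atTop, 1 ≤ α * N :=
    (hNat.const_mul_atTop hα0).eventually_ge_atTop 1
  have h2 : ∀ᶠ N : ℕ in Filter.atTop, 2 ≤ β * N :=
    (hNat.const_mul_atTop hβ0).eventually_ge_atTop 2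
  have h3 : ∀ᶠ N : ℕ in Filter.atTop, 1 ≤ (N : ℝ) := hNat.eventually_ge_atTop 1
  filter_upwards [h1, h2, h3] with N hα hβ hN
  have hfl_le : (⌊α * N⌋ : ℝ) ≤ α * N := Int.floor_le _
  have hfl_gt : α * N - 1 < (⌊α * N⌋ : ℝ) := Int.sub_one_lt_floor _
  have hfl_pos : (1 : ℤ) ≤ ⌊α * N⌋ := by
    rw [Int.le_floor]; exact_mod_cast hα
  have hn_cast : (⌊α * (N : ℝ)⌋ : ℤ) = ((nfun α N : ℕ) : ℤ) := by
    rw [nfun, Int.toNat_of_nonneg (by omega)]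
  have hn_castR : ((nfun α N : ℕ) : ℝ) = (⌊α * N⌋ : ℝ) := by
    exact_mod_cast congrArg (fun z : ℤ => (z : ℝ)) hn_cast.symm
  have hcl_ge : β * N ≤ (⌈β * N⌉ : ℝ) := Int.le_ceil _
  have hcl_lt : (⌈β * N⌉ : ℝ) < β * N + 1 := Int.ceil_lt_add_one _
  have hcl_two : (2 : ℤ) ≤ ⌈β * N⌉ := by
    have : ((2 : ℤ) : ℝ) ≤ (⌈β * N⌉ : ℝ) := le_trans (by exact_mod_cast hβ) hcl_ge
    exact_mod_cast this
  have hb_cast : ((bfun β N : ℕ) : ℤ) + 1 = ⌈β * (N : ℝ)⌉ := by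
    rw [bfun, Int.toNat_of_nonneg (by omega)]; ring
  have hb_castR : ((bfun β N : ℕ) : ℝ) = (⌈β * N⌉ : ℝ) - 1 := by
    have : (((bfun β N : ℕ) : ℤ) : ℝ) = ((⌈β * (N : ℝ)⌉ : ℤ) : ℝ) - 1 := by
      rw [← hb_cast]; push_cast; ring
    exact_mod_cast this
  have hn_pos : 0 < nfun α N := by
    have : (1 : ℤ) ≤ ((nfun α N : ℕ) : ℤ) := by rw [← hn_cast]; exact hfl_pos
    exact_mod_cast this
  have hb_pos : 0 < bfun β N := by
    have : (1 : ℤ) ≤ ((bfun β N : ℕ) : ℤ) := by omega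
    exact_mod_cast this
  have hn_le : (nfun α N : ℝ) ≤ α * N := by rw [hn_castR]; exact hfl_le
  have hn_gt : α * N - 1 < (nfun α N : ℝ) := by rw [hn_castR]; exact hfl_gt
  have hb_lt : (bfun β N : ℝ) < β * N := by rw [hb_castR]; linarith
  have hb_ge : β * N - 1 ≤ (bfun β N : ℝ) := by rw [hb_castR]; linarith
  have hn_ltN : nfun α N < N := by
    have : (nfun α N : ℝ) < (N : ℝ) :=
      lt_of_le_of_lt hn_le (by nlinarith)
    exact_mod_cast this
  have hb_ltN : bfun β N < N := by
    have : (bfun β N : ℝ) < (N : ℝ) := lt_of_lt_of_le hb_lt (by nlinarith)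
    exact_mod_cast this
  exact ⟨hn_pos, hn_ltN, hb_pos, hb_ltN, hn_le, hn_gt, hb_lt, hb_ge, hn_cast, hb_cast, hN⟩

/-- the probability equals the explicit formula, for large N -/
lemma formula_eventually (α β : ℝ) (hα0 : 0 < α) (hα1 : α < 1) (hβ0 : 0 < β) (hβ1 : β ≤ 1) :
    ∀ᶠ N : ℕ in Filter.atTop,
      prob N (1/2) ⌊α * (N : ℝ)⌋
          (fun w => β * (N : ℝ) ≤ (rangeCount ⌊α * (N : ℝ)⌋ w : ℝ)) =
      (if bfun β N ≤ nfun α N then ((N : ℝ) - nfun α N) / N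
       else ((nfun α N : ℝ) / bfun β N) * (((N : ℝ) - bfun β N) / N)) +
      (if bfun β N ≤ N - nfun α N then (nfun α N : ℝ) / N
       else (((N : ℝ) - nfun α N) / bfun β N) * (((N : ℝ) - bfun β N) / N)) := by
  filter_upwards [basic_facts α β hα0 hα1 hβ0 hβ1] with N hN
  obtain ⟨hn0, hnN, hb0, hbN, hnle, hngt, hblt, hbge, hncast, hbcast, hN1⟩ := hN
  rw [hncast, prob_eq]
  have hevent : {w : List Bool | β * (N : ℝ) ≤ (rangeCount ((nfun α N : ℕ) : ℤ) w : ℝ)} =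
      {w : List Bool | ((bfun β N : ℕ) : ℤ) + 1 ≤ (rangeCount ((nfun α N : ℕ) : ℤ) w : ℤ)} := by
    ext w
    simp only [Set.mem_setOf_eq]
    rw [hbcast]
    rw [show ((rangeCount ((nfun α N : ℕ) : ℤ) w : ℕ) : ℝ) =
      (((rangeCount ((nfun α N : ℕ) : ℤ) w : ℕ) : ℤ) : ℝ) by push_cast; ring]
    exact (Int.ceil_le).symm
  rw [hevent]
  exact main_formula N (nfun α N) (bfun β N) hn0 hnN hb0 hbN

open Filter in
lemma nfun_div_tendsto (α β : ℝ) (hα0 : 0 < α) (hα1 : α < 1) (hβ0 : 0 < β) (hβ1 : β ≤ 1) :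
    Tendsto (fun N : ℕ => (nfun α N : ℝ) / N) atTop (nhds α) := by
  have hlow : Tendsto (fun N : ℕ => α - 1 / (N : ℝ)) atTop (nhds α) := by
    have := tendsto_one_div_atTop_nhds_zero_nat (𝕜 := ℝ)
    have h := (tendsto_const_nhds (x := α) (f := atTop (α := ℕ))).sub this
    simpa using h
  refine tendsto_of_tendsto_of_tendsto_of_le_of_le' hlow tendsto_const_nhds ?_ ?_
  · filter_upwards [basic_facts α β hα0 hα1 hβ0 hβ1] with N hN
    obtain ⟨-, -, -, -, hnle, hngt, -, -, -, -, hN1⟩ := hN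
    have hNpos : (0 : ℝ) < N := by linarith
    rw [sub_le_iff_le_add, ← add_div, le_div_iff₀ hNpos]
    calc α * N = α * N - 1 + 1 := by ring
      _ ≤ (nfun α N : ℝ) + 1 := by linarith
  · filter_upwards [basic_facts α β hα0 hα1 hβ0 hβ1] with N hN
    obtain ⟨-, -, -, -, hnle, -, -, -, -, -, hN1⟩ := hN
    have hNpos : (0 : ℝ) < N := by linarith
    rw [div_le_iff₀ hNpos]
    linarith [hnle]

open Filter in
lemma bfun_div_tendsto (α β : ℝ) (hα0 : 0 < α) (hα1 : α < 1) (hβ0 : 0 < β) (hβ1 : β ≤ 1) :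
    Tendsto (fun N : ℕ => (bfun β N : ℝ) / N) atTop (nhds β) := by
  have hlow : Tendsto (fun N : ℕ => β - 1 / (N : ℝ)) atTop (nhds β) := by
    have := tendsto_one_div_atTop_nhds_zero_nat (𝕜 := ℝ)
    have h := (tendsto_const_nhds (x := β) (f := atTop (α := ℕ))).sub this
    simpa using h
  refine tendsto_of_tendsto_of_tendsto_of_le_of_le' hlow tendsto_const_nhds ?_ ?_
  · filter_upwards [basic_facts α β hα0 hα1 hβ0 hβ1] with N hN
    obtain ⟨-, -, -, -, -, -, -, hbge, -, -, hN1⟩ := hN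
    have hNpos : (0 : ℝ) < N := by linarith
    rw [sub_le_iff_le_add, ← add_div, le_div_iff₀ hNpos]
    calc β * N = β * N - 1 + 1 := by ring
      _ ≤ (bfun β N : ℝ) + 1 := by linarith
  · filter_upwards [basic_facts α β hα0 hα1 hβ0 hβ1] with N hN
    obtain ⟨-, -, -, -, -, -, hblt, -, -, -, hN1⟩ := hN
    have hNpos : (0 : ℝ) < N := by linarith
    rw [div_le_iff₀ hNpos]
    linarith [hblt]

open Filter in
/-- limits of the four branch expressions -/
lemma branch_tendsto (α β : ℝ) (hα0 : 0 < α) (hα1 : α < 1) (hβ0 : 0 < β) (hβ1 : β ≤ 1) :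
    Tendsto (fun N : ℕ => ((N : ℝ) - nfun α N) / N) atTop (nhds (1 - α)) ∧
    Tendsto (fun N : ℕ => ((nfun α N : ℝ) / bfun β N) * (((N : ℝ) - bfun β N) / N))
      atTop (nhds ((α / β) * (1 - β))) ∧
    Tendsto (fun N : ℕ => (nfun α N : ℝ) / N) atTop (nhds α) ∧
    Tendsto (fun N : ℕ => (((N : ℝ) - nfun α N) / bfun β N) * (((N : ℝ) - bfun β N) / N))
      atTop (nhds (((1 - α) / β) * (1 - β))) := by
  have hn := nfun_div_tendsto α β hα0 hα1 hβ0 hβ1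
  have hb := bfun_div_tendsto α β hα0 hα1 hβ0 hβ1
  have hNb : ∀ᶠ N : ℕ in atTop, (0 : ℝ) < N ∧ (0 : ℝ) < bfun β N := by
    filter_upwards [basic_facts α β hα0 hα1 hβ0 hβ1] with N hN
    obtain ⟨-, -, hb0, -, -, -, -, -, -, -, hN1⟩ := hN
    exact ⟨by linarith, by exact_mod_cast hb0⟩
  have hA1 : Tendsto (fun N : ℕ => ((N : ℝ) - nfun α N) / N) atTop (nhds (1 - α)) := by
    have h := (tendsto_const_nhds (x := (1:ℝ)) (f := atTop (α := ℕ))).sub hn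
    refine h.congr' ?_
    filter_upwards [hNb] with N hN
    have h1 : (N : ℝ) ≠ 0 := ne_of_gt hN.1
    field_simp
  have hBdiv : Tendsto (fun N : ℕ => ((N : ℝ) - bfun β N) / N) atTop (nhds (1 - β)) := by
    have h := (tendsto_const_nhds (x := (1:ℝ)) (f := atTop (α := ℕ))).sub hb
    refine h.congr' ?_
    filter_upwards [hNb] with N hN
    have h1 : (N : ℝ) ≠ 0 := ne_of_gt hN.1
    field_simp
  have hnb : Tendsto (fun N : ℕ => (nfun α N : ℝ) / bfun β N) atTop (nhds (α / β)) := by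
    have h := hn.div hb hβ0.ne'
    refine h.congr' ?_
    filter_upwards [hNb] with N hN
    have h1 : (N : ℝ) ≠ 0 := ne_of_gt hN.1
    have h2 : (bfun β N : ℝ) ≠ 0 := ne_of_gt hN.2
    simp only [Pi.div_apply]
    field_simp
  have hnb' : Tendsto (fun N : ℕ => ((N : ℝ) - nfun α N) / bfun β N) atTop
      (nhds ((1 - α) / β)) := by
    have h := hA1.div hb hβ0.ne'
    refine h.congr' ?_
    filter_upwards [hNb] with N hN
    have h1 : (N : ℝ) ≠ 0 := ne_of_gt hN.1
    have h2 : (bfun β N : ℝ) ≠ 0 := ne_of_gt hN.2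
    simp only [Pi.div_apply]
    field_simp
  exact ⟨hA1, hnb.mul hBdiv, hn, hnb'.mul hBdiv⟩

open Filter in
lemma cond_A_le (α β : ℝ) (hα0 : 0 < α) (hα1 : α < 1) (hβ0 : 0 < β) (hβ1 : β ≤ 1)
    (h : β ≤ α) : ∀ᶠ N : ℕ in atTop, bfun β N ≤ nfun α N := by
  filter_upwards [basic_facts α β hα0 hα1 hβ0 hβ1] with N hN
  obtain ⟨-, -, -, -, -, hngt, hblt, -, -, -, hN1⟩ := hN
  have : (bfun β N : ℝ) < (nfun α N : ℝ) + 1 := by nlinarith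
  have : bfun β N < nfun α N + 1 := by exact_mod_cast this
  omega

open Filter in
lemma cond_A_gt (α β : ℝ) (hα0 : 0 < α) (hα1 : α < 1) (hβ0 : 0 < β) (hβ1 : β ≤ 1)
    (h : α < β) : ∀ᶠ N : ℕ in atTop, ¬ (bfun β N ≤ nfun α N) := by
  have hNat : Tendsto (fun N : ℕ => (N : ℝ)) atTop atTop := tendsto_natCast_atTop_atTop
  have hev : ∀ᶠ N : ℕ in atTop, 2 ≤ (β - α) * N :=
    (hNat.const_mul_atTop (by linarith)).eventually_ge_atTop 2
  filter_upwards [basic_facts α β hα0 hα1 hβ0 hβ1, hev] with N hN hsep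
  obtain ⟨-, -, -, -, hnle, -, -, hbge, -, -, hN1⟩ := hN
  have : (nfun α N : ℝ) < (bfun β N : ℝ) := by nlinarith
  have : nfun α N < bfun β N := by exact_mod_cast this
  omega

open Filter in
lemma cond_B_le (α β : ℝ) (hα0 : 0 < α) (hα1 : α < 1) (hβ0 : 0 < β) (hβ1 : β ≤ 1)
    (h : β ≤ 1 - α) : ∀ᶠ N : ℕ in atTop, bfun β N ≤ N - nfun α N := by
  filter_upwards [basic_facts α β hα0 hα1 hβ0 hβ1] with N hN
  obtain ⟨-, hnN, -, -, hnle, -, hblt, -, -, -, hN1⟩ := hN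
  have hcast : ((N - nfun α N : ℕ) : ℝ) = (N : ℝ) - nfun α N := by
    push_cast [Nat.cast_sub hnN.le]; ring
  have : (bfun β N : ℝ) < ((N - nfun α N : ℕ) : ℝ) := by rw [hcast]; nlinarith
  have : bfun β N < N - nfun α N := by exact_mod_cast this
  omega

open Filter in
lemma cond_B_gt (α β : ℝ) (hα0 : 0 < α) (hα1 : α < 1) (hβ0 : 0 < β) (hβ1 : β ≤ 1)
    (h : 1 - α < β) : ∀ᶠ N : ℕ in atTop, ¬ (bfun β N ≤ N - nfun α N) := by
  have hNat : Tendsto (fun N : ℕ => (N : ℝ)) atTop atTop := tendsto_natCast_atTop_atTop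
  have hev : ∀ᶠ N : ℕ in atTop, 3 ≤ (β - (1 - α)) * N :=
    (hNat.const_mul_atTop (by linarith)).eventually_ge_atTop 3
  filter_upwards [basic_facts α β hα0 hα1 hβ0 hβ1, hev] with N hN hsep
  obtain ⟨-, hnN, -, -, -, hngt, -, hbge, -, -, hN1⟩ := hN
  have hcast : ((N - nfun α N : ℕ) : ℝ) = (N : ℝ) - nfun α N := by
    push_cast [Nat.cast_sub hnN.le]; ring
  have : ((N - nfun α N : ℕ) : ℝ) < (bfun β N : ℝ) := by rw [hcast]; nlinarith
  have : N - nfun α N < bfun β N := by exact_mod_cast this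
  omega


/-- Proposition 1 (symmetric case): for the symmetric walk started from `⌊αN⌋`,
`P_{⌊αN⌋}(R_N ≥ βN)` converges to the tail of the limit law `G_{0,α}`. -/
theorem range_limit_symmetric (α β : ℝ) (hα0 : 0 < α) (hα1 : α < 1)
    (hβ0 : 0 < β) (hβ1 : β ≤ 1) :
    (β ≤ min α (1 - α) →
      Tendsto (fun N : ℕ => prob N (1/2) ⌊α * (N : ℝ)⌋
          fun w => β * (N : ℝ) ≤ (rangeCount ⌊α * (N : ℝ)⌋ w : ℝ))
        atTop (𝓝 1)) ∧
    (min α (1 - α) < β ∧ β < max α (1 - α) →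
      Tendsto (fun N : ℕ => prob N (1/2) ⌊α * (N : ℝ)⌋
          fun w => β * (N : ℝ) ≤ (rangeCount ⌊α * (N : ℝ)⌋ w : ℝ))
        atTop (𝓝 (min α (1 - α) / β))) ∧
    (max α (1 - α) ≤ β →
      Tendsto (fun N : ℕ => prob N (1/2) ⌊α * (N : ℝ)⌋
          fun w => β * (N : ℝ) ≤ (rangeCount ⌊α * (N : ℝ)⌋ w : ℝ))
        atTop (𝓝 ((1 - β) / β))) := by
  have hforma := formula_eventually α β hα0 hα1 hβ0 hβ1
  obtain ⟨hA1, hA2, hB1, hB2⟩ := branch_tendsto α β hα0 hα1 hβ0 hβ1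
  set A : ℕ → ℝ := fun N => if bfun β N ≤ nfun α N then ((N : ℝ) - nfun α N) / N
    else ((nfun α N : ℝ) / bfun β N) * (((N : ℝ) - bfun β N) / N) with hA
  set B : ℕ → ℝ := fun N => if bfun β N ≤ N - nfun α N then (nfun α N : ℝ) / N
    else (((N : ℝ) - nfun α N) / bfun β N) * (((N : ℝ) - bfun β N) / N) with hB
  have key : ∀ (LA LB : ℝ), Tendsto A atTop (𝓝 LA) → Tendsto B atTop (𝓝 LB) →
      Tendsto (fun N : ℕ => prob N (1/2) ⌊α * (N : ℝ)⌋
          fun w => β * (N : ℝ) ≤ (rangeCount ⌊α * (N : ℝ)⌋ w : ℝ)) atTop (𝓝 (LA + LB)) := by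
    intro LA LB hTA hTB
    refine (hTA.add hTB).congr' ?_
    exact hforma.mono fun N h => h.symm
  have hAle : β ≤ α → Tendsto A atTop (𝓝 (1 - α)) := by
    intro h
    refine hA1.congr' ((cond_A_le α β hα0 hα1 hβ0 hβ1 h).mono fun N hc => ?_)
    exact (if_pos hc).symm
  have hAgt : α < β → Tendsto A atTop (𝓝 ((α / β) * (1 - β))) := by
    intro h
    refine hA2.congr' ((cond_A_gt α β hα0 hα1 hβ0 hβ1 h).mono fun N hc => ?_)
    exact (if_neg hc).symm
  have hBle : β ≤ 1 - α → Tendsto B atTop (𝓝 α) := by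
    intro h
    refine hB1.congr' ((cond_B_le α β hα0 hα1 hβ0 hβ1 h).mono fun N hc => ?_)
    exact (if_pos hc).symm
  have hBgt : 1 - α < β → Tendsto B atTop (𝓝 (((1 - α) / β) * (1 - β))) := by
    intro h
    refine hB2.congr' ((cond_B_gt α β hα0 hα1 hβ0 hβ1 h).mono fun N hc => ?_)
    exact (if_neg hc).symm
  refine ⟨?_, ?_, ?_⟩
  · intro hβmin
    have h1 : β ≤ α := le_trans hβmin (min_le_left _ _)
    have h2 : β ≤ 1 - α := le_trans hβmin (min_le_right _ _)
    have := key (1 - α) α (hAle h1) (hBle h2)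
    rwa [show (1 - α) + α = 1 by ring] at this
  · rintro ⟨h1, h2⟩
    rcases le_or_gt α (1 - α) with hc | hc
    · rw [min_eq_left hc] at h1 ⊢
      rw [max_eq_right hc] at h2
      have := key ((α / β) * (1 - β)) α (hAgt h1) (hBle h2.le)
      rwa [show (α / β) * (1 - β) + α = α / β by field_simp; ring] at this
    · rw [min_eq_right hc.le] at h1 ⊢
      rw [max_eq_left hc.le] at h2
      have := key (1 - α) (((1 - α) / β) * (1 - β)) (hAle h2.le) (hBgt h1)
      rwa [show (1 - α) + ((1 - α) / β) * (1 - β) = (1 - α) / β by field_simp; ring] at this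
  · intro h
    have h1 : α ≤ β := le_trans (le_max_left _ _) h
    have h2 : 1 - α ≤ β := le_trans (le_max_right _ _) h
    rcases eq_or_lt_of_le h1 with he1 | hl1 <;> rcases eq_or_lt_of_le h2 with he2 | hl2
    · -- α = β and 1 - α = β  (so β = 1/2)
      have := key (1 - α) α (hAle he1.ge) (hBle he2.ge)
      rwa [show (1 - α) + α = (1 - β) / β by
        rw [← he1] at he2 ⊢
        have hα : α = 1/2 := by linarith
        rw [hα]; norm_num] at this
    · -- α = β and 1 - α < β
      have := key (1 - α) (((1 - α) / β) * (1 - β)) (hAle he1.ge) (hBgt hl2)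
      rwa [show (1 - α) + ((1 - α) / β) * (1 - β) = (1 - β) / β by
        rw [← he1]; field_simp; ring] at this
    · -- α < β and 1 - α = β
      have := key ((α / β) * (1 - β)) α (hAgt hl1) (hBle he2.ge)
      rwa [show (α / β) * (1 - β) + α = (1 - β) / β by
        have hne : 1 - α ≠ 0 := by rw [he2]; exact hβ0.ne'
        rw [← he2]; field_simp; ring] at this
    · -- α < β and 1 - α < β
      have := key ((α / β) * (1 - β)) (((1 - α) / β) * (1 - β)) (hAgt hl1) (hBgt hl2)
      rwa [show (α / β) * (1 - β) + ((1 - α) / β) * (1 - β) = (1 - β) / β by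
        field_simp; ring] at this
end

section
/- For the weakly asymmetric random walk with parameter c > 0 started from ⌊αN⌋ with 0 < α < 1, for every β with 0 < β ≤ 1, the probability P_{⌊αN⌋}(R_N ≥ βN) converges as N → ∞ to: 1 if β ≤ min(α,1−α); (1−e^{−4cα})/(1−e^{−4cβ}) if α ≤ β ≤ 1−α; (1−e^{4c(1−α)})/(1−e^{4cβ}) if 1−α ≤ β ≤ α; and e^{−4αc}(e^{4c(1−β)}−1)/(1−e^{−4cβ}) if max(α,1−α) ≤ β ≤ 1. -/
open Filter Topology

namespace RW

def step (b : Bool) : ℤ := cond b 1 (-1)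

lemma walkPos_nil (x : ℤ) : walkPos x [] = x := by simp [walkPos]

lemma walkPos_cons (x : ℤ) (b : Bool) (w : List Bool) :
    walkPos x (b :: w) = walkPos (x + step b) w := by
  cases b <;> simp [walkPos, step, List.count_cons] <;> ring

lemma walkPos_take_cons (x : ℤ) (b : Bool) (w : List Bool) (j : ℕ) :
    walkPos x ((b :: w).take (j + 1)) = walkPos (x + step b) (w.take j) := by
  rw [List.take_succ_cons, walkPos_cons]

lemma walkPos_nil' (x : ℤ) : walkPos x [] = x := walkPos_nil x

lemma walkPos_take_cons_true (x : ℤ) (w : List Bool) (j : ℕ) :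
    walkPos x ((true :: w).take (j + 1)) = walkPos (x + 1) (w.take j) := by
  rw [walkPos_take_cons]
  norm_num [step]

lemma walkPos_take_cons_false (x : ℤ) (w : List Bool) (j : ℕ) :
    walkPos x ((false :: w).take (j + 1)) = walkPos (x - 1) (w.take j) := by
  rw [walkPos_take_cons]
  congr 1

lemma exit_nil {N : ℕ} {x : ℤ} : IsExitPath N x [] ↔ x = 0 ∨ x = (N : ℤ) := by
  constructor
  · rintro ⟨-, h⟩; simpa [walkPos_nil] using h
  · intro h; exact ⟨by simp, by simpa [walkPos_nil] using h⟩

lemma exit_cons {N : ℕ} {x : ℤ} (hx0 : 0 < x) (hxN : x < (N : ℤ)) (b : Bool) (w : List Bool) :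
    IsExitPath N x (b :: w) ↔ IsExitPath N (x + step b) w := by
  constructor
  · rintro ⟨h1, h2⟩
    refine ⟨fun k hk => ?_, by rwa [walkPos_cons] at h2⟩
    have := h1 (k + 1) (by simpa using Nat.succ_lt_succ hk)
    rwa [walkPos_take_cons] at this
  · rintro ⟨h1, h2⟩
    refine ⟨fun k hk => ?_, by rwa [walkPos_cons]⟩
    cases k with
    | zero => simpa [walkPos_nil] using ⟨hx0, hxN⟩
    | succ j =>
      rw [walkPos_take_cons]
      exact h1 j (by simpa using Nat.succ_lt_succ_iff.mp hk)

lemma exit_cons_true {N : ℕ} {x : ℤ} (hx0 : 0 < x) (hxN : x < (N : ℤ)) {w : List Bool} :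
    IsExitPath N x (true :: w) ↔ IsExitPath N (x + 1) w := by
  rw [exit_cons hx0 hxN true w]
  norm_num [step]

lemma exit_cons_false {N : ℕ} {x : ℤ} (hx0 : 0 < x) (hxN : x < (N : ℤ)) {w : List Bool} :
    IsExitPath N x (false :: w) ↔ IsExitPath N (x - 1) w := by
  rw [exit_cons hx0 hxN false w]
  have : x + step false = x - 1 := by simp [step]; ring
  rw [this]

lemma not_exit_nil {N : ℕ} {x : ℤ} (hx0 : 0 < x) (hxN : x < (N : ℤ)) :
    ¬ IsExitPath N x [] := by
  rw [exit_nil]; rintro (rfl | rfl) <;> omega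

lemma not_exit_cons_of_boundary {N : ℕ} {x : ℤ} (hx : x = 0 ∨ x = (N : ℤ))
    (b : Bool) (w : List Bool) : ¬ IsExitPath N x (b :: w) := by
  rintro ⟨h1, -⟩
  have := h1 0 (by simp)
  rw [List.take_zero, walkPos_nil] at this
  rcases hx with rfl | rfl <;> omega

lemma exit_prefix {N : ℕ} {x : ℤ} {w w' : List Bool} (h : IsExitPath N x w)
    (h' : IsExitPath N x w') (hp : w <+: w') : w = w' := by
  rcases eq_or_lt_of_le hp.length_le with hl | hl
  · exact hp.eq_of_length hl
  · exfalso
    have hw : w = w'.take w.length := List.prefix_iff_eq_take.mp hp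
    have h2 := h'.1 w.length hl
    rw [← hw] at h2
    rcases h.2 with he | he <;> rw [he] at h2 <;> omega

open ENNReal in
noncomputable def ewt (p : ℝ) (w : List Bool) : ℝ≥0∞ :=
  ENNReal.ofReal p ^ w.count true * ENNReal.ofReal (1 - p) ^ w.count false

open ENNReal

noncomputable def eprob (N : ℕ) (p : ℝ) (x : ℤ) (S : List Bool → Prop) : ℝ≥0∞ :=
  ∑' w : List Bool, Set.indicator {w | IsExitPath N x w ∧ S w} (ewt p) w

lemma ewt_nil (p : ℝ) : ewt p [] = 1 := by simp [ewt]

lemma ewt_cons (p : ℝ) (b : Bool) (w : List Bool) :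
    ewt p (b :: w) = (cond b (ENNReal.ofReal p) (ENNReal.ofReal (1 - p))) * ewt p w := by
  cases b <;> simp [ewt, List.count_cons, pow_succ] <;> ring

lemma ewt_ne_top (p : ℝ) (w : List Bool) : ewt p w ≠ ∞ := by
  simp [ewt]
  exact ENNReal.mul_ne_top (by simp [ENNReal.pow_ne_top, ofReal_ne_top])
    (by simp [ENNReal.pow_ne_top, ofReal_ne_top])

/-- splitting a tsum over lists into nil and the two cons cases -/
lemma tsum_list (f : List Bool → ℝ≥0∞) :
    ∑' w : List Bool, f w = f [] + (∑' w : List Bool, f (true :: w)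
      + ∑' w : List Bool, f (false :: w)) := by
  rw [ENNReal.tsum_eq_add_tsum_ite ([] : List Bool)]
  congr 1
  have hinj : Function.Injective (fun bw : Bool × List Bool => bw.1 :: bw.2) := by
    rintro ⟨b, w⟩ ⟨b', w'⟩ h; simpa using h
  refine ((Function.Injective.tsum_eq hinj ?_).symm.trans ?_)
  · intro w hw
    cases w with
    | nil => simp at hw
    | cons b w => exact ⟨(b, w), rfl⟩
  · rw [ENNReal.tsum_prod', tsum_bool]
    simp only [reduceCtorEq, if_false]
    ring


lemma eprob_congr_iff {N : ℕ} {p : ℝ} {x : ℤ} {S S' : List Bool → Prop}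
    (h : ∀ w, IsExitPath N x w → (S w ↔ S' w)) :
    eprob N p x S = eprob N p x S' := by
  unfold eprob
  have hset : {w | IsExitPath N x w ∧ S w} = {w | IsExitPath N x w ∧ S' w} := by
    ext w
    exact ⟨fun hc => ⟨hc.1, (h w hc.1).mp hc.2⟩, fun hc => ⟨hc.1, (h w hc.1).mpr hc.2⟩⟩
  rw [hset]

lemma eprob_congr_iff' {N : ℕ} {p : ℝ} {x : ℤ} {S S' : List Bool → Prop}
    (h : ∀ w, S w ↔ S' w) : eprob N p x S = eprob N p x S' :=
  eprob_congr_iff (fun w _ => h w)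

lemma eprob_boundary {N : ℕ} {p : ℝ} {x : ℤ} (hx : x = 0 ∨ x = (N : ℤ))
    (S : List Bool → Prop) :
    eprob N p x S = Set.indicator {w | IsExitPath N x w ∧ S w} (ewt p) [] := by
  apply tsum_eq_single
  intro w hw
  cases w with
  | nil => exact absurd rfl hw
  | cons b w =>
    exact Set.indicator_of_notMem (fun hc => not_exit_cons_of_boundary hx b w hc.1) _

lemma eprob_boundary_of {N : ℕ} {p : ℝ} {x : ℤ} (hx : x = 0 ∨ x = (N : ℤ))
    {S : List Bool → Prop} (hS : S []) : eprob N p x S = 1 := by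
  have hm : ([] : List Bool) ∈ {w | IsExitPath N x w ∧ S w} := ⟨exit_nil.mpr hx, hS⟩
  rw [eprob_boundary hx, Set.indicator_of_mem hm, ewt_nil]

lemma eprob_boundary_not {N : ℕ} {p : ℝ} {x : ℤ} (hx : x = 0 ∨ x = (N : ℤ))
    {S : List Bool → Prop} (hS : ¬ S []) : eprob N p x S = 0 := by
  rw [eprob_boundary hx, Set.indicator_of_notMem (fun hc => hS hc.2)]

lemma eprob_rec {N : ℕ} {p : ℝ} {x : ℤ} (hx0 : 0 < x) (hxN : x < (N : ℤ))
    (S : List Bool → Prop) :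
    eprob N p x S = ENNReal.ofReal p * eprob N p (x + 1) (fun w => S (true :: w))
      + ENNReal.ofReal (1 - p) * eprob N p (x - 1) (fun w => S (false :: w)) := by
  unfold eprob
  rw [tsum_list]
  rw [Set.indicator_of_notMem (fun hc => not_exit_nil hx0 hxN hc.1), zero_add]
  congr 1
  · rw [← ENNReal.tsum_mul_left]
    apply tsum_congr; intro w
    by_cases h : IsExitPath N (x + 1) w ∧ S (true :: w)
    · have hm : (true :: w) ∈ {w | IsExitPath N x w ∧ S w} :=
        ⟨(exit_cons_true hx0 hxN).mpr h.1, h.2⟩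
      have hm' : w ∈ {w | IsExitPath N (x + 1) w ∧ S (true :: w)} := h
      rw [Set.indicator_of_mem hm, Set.indicator_of_mem hm', ewt_cons]
      rfl
    · have hm : (true :: w) ∉ {w | IsExitPath N x w ∧ S w} := fun hc =>
        h ⟨(exit_cons_true hx0 hxN).mp hc.1, hc.2⟩
      have hm' : w ∉ {w | IsExitPath N (x + 1) w ∧ S (true :: w)} := h
      rw [Set.indicator_of_notMem hm, Set.indicator_of_notMem hm', mul_zero]
  · rw [← ENNReal.tsum_mul_left]
    apply tsum_congr; intro w
    by_cases h : IsExitPath N (x - 1) w ∧ S (false :: w)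
    · have hm : (false :: w) ∈ {w | IsExitPath N x w ∧ S w} :=
        ⟨(exit_cons_false hx0 hxN).mpr h.1, h.2⟩
      have hm' : w ∈ {w | IsExitPath N (x - 1) w ∧ S (false :: w)} := h
      rw [Set.indicator_of_mem hm, Set.indicator_of_mem hm', ewt_cons]
      rfl
    · have hm : (false :: w) ∉ {w | IsExitPath N x w ∧ S w} := fun hc =>
        h ⟨(exit_cons_false hx0 hxN).mp hc.1, hc.2⟩
      have hm' : w ∉ {w | IsExitPath N (x - 1) w ∧ S (false :: w)} := h
      rw [Set.indicator_of_notMem hm, Set.indicator_of_notMem hm', mul_zero]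

lemma sum_ewt_le_one {p : ℝ} (hp0 : 0 ≤ p) (hp1 : p ≤ 1) :
    ∀ (m : ℕ) (F : Finset (List Bool)), (∑ w ∈ F, w.length) = m →
      (∀ w ∈ F, ∀ w' ∈ F, w <+: w' → w = w') →
      ∑ w ∈ F, ewt p w ≤ 1 := by
  intro m
  induction m using Nat.strong_induction_on with
  | _ m ih =>
    intro F hm hpf
    rcases F.eq_empty_or_nonempty with rfl | hne
    · simp
    by_cases hnil : ([] : List Bool) ∈ F
    · have hF : F = {[]} := by
        apply Finset.eq_singleton_iff_unique_mem.mpr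
        exact ⟨hnil, fun w hw => (hpf _ hnil _ hw (List.nil_prefix)).symm⟩
      simp [hF, ewt_nil]
    -- all members are nonempty lists
    have hmem : ∀ w ∈ F, w ≠ [] := fun w hw hc => hnil (hc ▸ hw)
    have hsplit := Finset.sum_filter_add_sum_filter_not F
      (fun w => w.head? = some true) (fun w => ewt p w)
    -- treat one branch generically
    have branch : ∀ b : Bool,
        (∑ w ∈ F.filter (fun w => w.head? = some b), ewt p w)
          ≤ (cond b (ENNReal.ofReal p) (ENNReal.ofReal (1 - p))) := by
      intro b
      set Fb := F.filter (fun w => w.head? = some b) with hFb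
      have hcons : ∀ w ∈ Fb, w = b :: w.tail := by
        intro w hw
        have := (Finset.mem_filter.mp hw).2
        exact (List.cons_head?_tail this).symm
      have hinj : ∀ w ∈ Fb, ∀ w' ∈ Fb, w.tail = w'.tail → w = w' := by
        intro w hw w' hw' ht
        rw [hcons w hw, hcons w' hw', ht]
      have hsum : ∑ w ∈ Fb, ewt p w
          = (cond b (ENNReal.ofReal p) (ENNReal.ofReal (1 - p)))
            * ∑ v ∈ Fb.image List.tail, ewt p v := by
        rw [Finset.mul_sum, Finset.sum_image hinj]
        apply Finset.sum_congr rfl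
        intro w hw
        conv_lhs => rw [hcons w hw, ewt_cons]
      rcases Fb.eq_empty_or_nonempty with hemp | hbne
      · rw [hemp]; simp
      have htail_le : ∑ v ∈ Fb.image List.tail, ewt p v ≤ 1 := by
        apply ih (∑ v ∈ Fb.image List.tail, v.length) ?_ _ rfl
        · -- prefix-free of tails
          intro v hv v' hv' hpre
          obtain ⟨w, hw, rfl⟩ := Finset.mem_image.mp hv
          obtain ⟨w', hw', rfl⟩ := Finset.mem_image.mp hv'
          have h1 : w <+: w' := by
            rw [hcons w hw, hcons w' hw']
            exact List.cons_prefix_cons.mpr ⟨rfl, hpre⟩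
          rw [hpf w (Finset.mem_filter.mp hw).1 w' (Finset.mem_filter.mp hw').1 h1]
        · -- measure decreases
          rw [← hm]
          calc ∑ v ∈ Fb.image List.tail, v.length
              = ∑ w ∈ Fb, w.tail.length := Finset.sum_image hinj
            _ < ∑ w ∈ Fb, w.length := by
                apply Finset.sum_lt_sum_of_nonempty hbne
                intro w hw
                have := hmem w (Finset.mem_filter.mp hw).1
                cases w with
                | nil => exact absurd rfl this
                | cons c t => simp
            _ ≤ ∑ w ∈ F, w.length := Finset.sum_le_sum_of_subset (Finset.filter_subset _ _)
      calc ∑ w ∈ Fb, ewt p w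
          = _ * _ := hsum
        _ ≤ (cond b (ENNReal.ofReal p) (ENNReal.ofReal (1 - p))) * 1 := by
            exact mul_le_mul_right htail_le _
        _ = _ := mul_one _
    have hnotfilter : F.filter (fun w => ¬ (w.head? = some true))
        = F.filter (fun w => w.head? = some false) := by
      apply Finset.filter_congr
      intro w hw
      cases hw2 : w.head? with
      | none => exact absurd (List.head?_eq_none_iff.mp hw2) (hmem w hw)
      | some b => cases b <;> simp
    calc ∑ w ∈ F, ewt p w
        = _ + _ := hsplit.symm
      _ ≤ ENNReal.ofReal p + ENNReal.ofReal (1 - p) := by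
          apply add_le_add
          · exact branch true
          · rw [hnotfilter]; exact branch false
      _ = 1 := by
          rw [← ENNReal.ofReal_add hp0 (by linarith)]
          norm_num

lemma indicator_sub_exit {N : ℕ} {p : ℝ} {x : ℤ} {S : List Bool → Prop}
    {w : List Bool} : Set.indicator {w | IsExitPath N x w ∧ S w} (ewt p) w ≤ ewt p w :=
  Set.indicator_le_self _ _ w

lemma eprob_le_one {N : ℕ} {p : ℝ} {x : ℤ} {S : List Bool → Prop}
    (hp0 : 0 ≤ p) (hp1 : p ≤ 1) : eprob N p x S ≤ 1 := by
  rw [eprob, ENNReal.tsum_eq_iSup_sum]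
  apply iSup_le
  intro F
  classical
  have h1 : ∑ w ∈ F, Set.indicator {w | IsExitPath N x w ∧ S w} (ewt p) w
      = ∑ w ∈ F.filter (fun w => w ∈ {w | IsExitPath N x w ∧ S w}), ewt p w := by
    rw [Finset.sum_filter]
    apply Finset.sum_congr rfl
    intro w _
    by_cases h : w ∈ {w | IsExitPath N x w ∧ S w}
    · rw [Set.indicator_of_mem h, if_pos h]
    · rw [Set.indicator_of_notMem h, if_neg h]
  rw [h1]
  apply sum_ewt_le_one hp0 hp1 _ _ rfl
  intro w hw w' hw' hpre
  exact exit_prefix (Finset.mem_filter.mp hw).2.1 (Finset.mem_filter.mp hw').2.1 hpre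

lemma eprob_ne_top {N : ℕ} {p : ℝ} {x : ℤ} {S : List Bool → Prop}
    (hp0 : 0 ≤ p) (hp1 : p ≤ 1) : eprob N p x S ≠ ∞ :=
  ne_top_of_le_ne_top ENNReal.one_ne_top (eprob_le_one hp0 hp1)

lemma prob_eq_toReal {N : ℕ} {p : ℝ} {x : ℤ} (S : List Bool → Prop)
    (hp0 : 0 ≤ p) (hp1 : p ≤ 1) :
    prob N p x S = (eprob N p x S).toReal := by
  rw [eprob, ENNReal.tsum_toReal_eq]
  · unfold prob
    apply tsum_congr
    intro w
    by_cases h : w ∈ {w | IsExitPath N x w ∧ S w}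
    · rw [Set.indicator_of_mem h, Set.indicator_of_mem h]
      simp only [ewt, wt, ENNReal.toReal_mul, ENNReal.toReal_pow,
        ENNReal.toReal_ofReal hp0, ENNReal.toReal_ofReal (by linarith : (0:ℝ) ≤ 1 - p)]
    · rw [Set.indicator_of_notMem h, Set.indicator_of_notMem h, ENNReal.toReal_zero]
  · intro w
    by_cases h : w ∈ {w | IsExitPath N x w ∧ S w}
    · rw [Set.indicator_of_mem h]; exact ewt_ne_top p w
    · rw [Set.indicator_of_notMem h]; exact ENNReal.zero_ne_top

lemma eprob_inter_add_union (N : ℕ) (p : ℝ) (x : ℤ) (S S' : List Bool → Prop) :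
    eprob N p x (fun w => S w ∧ S' w) + eprob N p x (fun w => S w ∨ S' w)
      = eprob N p x S + eprob N p x S' := by
  unfold eprob
  rw [← ENNReal.tsum_add, ← ENNReal.tsum_add]
  apply tsum_congr
  intro w
  by_cases hE : IsExitPath N x w
  · by_cases h1 : S w <;> by_cases h2 : S' w
    · rw [Set.indicator_of_mem (show w ∈ {w | IsExitPath N x w ∧ S w ∧ S' w} from ⟨hE, h1, h2⟩),
        Set.indicator_of_mem (show w ∈ {w | IsExitPath N x w ∧ (S w ∨ S' w)} from ⟨hE, Or.inl h1⟩),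
        Set.indicator_of_mem (show w ∈ {w | IsExitPath N x w ∧ S w} from ⟨hE, h1⟩),
        Set.indicator_of_mem (show w ∈ {w | IsExitPath N x w ∧ S' w} from ⟨hE, h2⟩)]
    · rw [Set.indicator_of_notMem (show w ∉ {w | IsExitPath N x w ∧ S w ∧ S' w} from
          fun hc => h2 hc.2.2),
        Set.indicator_of_mem (show w ∈ {w | IsExitPath N x w ∧ (S w ∨ S' w)} from ⟨hE, Or.inl h1⟩),
        Set.indicator_of_mem (show w ∈ {w | IsExitPath N x w ∧ S w} from ⟨hE, h1⟩),
        Set.indicator_of_notMem (show w ∉ {w | IsExitPath N x w ∧ S' w} from fun hc => h2 hc.2)]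
      rw [zero_add, add_zero]
    · rw [Set.indicator_of_notMem (show w ∉ {w | IsExitPath N x w ∧ S w ∧ S' w} from
          fun hc => h1 hc.2.1),
        Set.indicator_of_mem (show w ∈ {w | IsExitPath N x w ∧ (S w ∨ S' w)} from ⟨hE, Or.inr h2⟩),
        Set.indicator_of_notMem (show w ∉ {w | IsExitPath N x w ∧ S w} from fun hc => h1 hc.2),
        Set.indicator_of_mem (show w ∈ {w | IsExitPath N x w ∧ S' w} from ⟨hE, h2⟩)]
    · rw [Set.indicator_of_notMem (show w ∉ {w | IsExitPath N x w ∧ S w ∧ S' w} from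
          fun hc => h1 hc.2.1),
        Set.indicator_of_notMem (show w ∉ {w | IsExitPath N x w ∧ (S w ∨ S' w)} from
          fun hc => hc.2.elim h1 h2),
        Set.indicator_of_notMem (show w ∉ {w | IsExitPath N x w ∧ S w} from fun hc => h1 hc.2),
        Set.indicator_of_notMem (show w ∉ {w | IsExitPath N x w ∧ S' w} from fun hc => h2 hc.2)]
  · rw [Set.indicator_of_notMem (show w ∉ {w | IsExitPath N x w ∧ S w ∧ S' w} from
        fun hc => hE hc.1),
      Set.indicator_of_notMem (show w ∉ {w | IsExitPath N x w ∧ (S w ∨ S' w)} from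
        fun hc => hE hc.1),
      Set.indicator_of_notMem (show w ∉ {w | IsExitPath N x w ∧ S w} from fun hc => hE hc.1),
      Set.indicator_of_notMem (show w ∉ {w | IsExitPath N x w ∧ S' w} from fun hc => hE hc.1)]

/-! ### Uniqueness for the discrete Dirichlet problem -/

lemma unique_rec {p : ℝ} (hp0 : 0 < p) (hp1 : p < 1) {n : ℕ} {f g : ℕ → ℝ}
    (hf : ∀ y, y + 2 ≤ n → f (y + 1) = p * f (y + 2) + (1 - p) * f y)
    (hg : ∀ y, y + 2 ≤ n → g (y + 1) = p * g (y + 2) + (1 - p) * g y)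
    (h0 : f 0 = g 0) (hn : f n = g n) : ∀ y ≤ n, f y = g y := by
  rcases Nat.eq_zero_or_pos n with rfl | hn1
  · intro y hy
    interval_cases y
    exact h0
  set d : ℕ → ℝ := fun y => f y - g y with hd
  set ρ : ℝ := (1 - p) / p with hρ
  have hρ0 : 0 < ρ := div_pos (by linarith) hp0
  have e_rec : ∀ y, y + 2 ≤ n → d (y + 2) - d (y + 1) = ρ * (d (y + 1) - d y) := by
    intro y hy
    have hd1 : d (y + 1) = p * d (y + 2) + (1 - p) * d y := by
      simp only [hd]
      rw [hf y hy, hg y hy]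
      ring
    rw [hρ, div_mul_eq_mul_div, eq_div_iff hp0.ne']
    linear_combination -hd1
  have e_geom : ∀ y, y + 1 ≤ n → d (y + 1) - d y = ρ ^ y * (d 1 - d 0) := by
    intro y
    induction y with
    | zero => intro _; simp
    | succ m ih =>
      intro hy
      have : m + 2 ≤ n := hy
      rw [show m + 1 + 1 = m + 2 from rfl, e_rec m this, ih (by omega), pow_succ]
      ring
  have hd0 : d 0 = 0 := by simp [hd, h0]
  have hdn : d n = 0 := by simp [hd, hn]
  have tele : ∑ y ∈ Finset.range n, (d (y + 1) - d y) = d n - d 0 := Finset.sum_range_sub d n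
  have sum_eq : (∑ y ∈ Finset.range n, ρ ^ y) * (d 1 - d 0) = 0 := by
    rw [Finset.sum_mul]
    have hcg : ∑ y ∈ Finset.range n, ρ ^ y * (d 1 - d 0)
        = ∑ y ∈ Finset.range n, (d (y + 1) - d y) :=
      Finset.sum_congr rfl (fun y hy => (e_geom y (Finset.mem_range.mp hy)).symm)
    rw [hcg, tele, hdn, hd0, sub_zero]
  have hsum_pos : 0 < ∑ y ∈ Finset.range n, ρ ^ y :=
    Finset.sum_pos (fun y _ => pow_pos hρ0 y) ⟨0, Finset.mem_range.mpr hn1⟩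
  have hd1 : d 1 - d 0 = 0 := by
    rcases mul_eq_zero.mp sum_eq with h | h
    · exact absurd h hsum_pos.ne'
    · exact h
  have hdall : ∀ y, y ≤ n → d y = 0 := by
    intro y
    induction y with
    | zero => intro _; exact hd0
    | succ m ih =>
      intro hy
      have h1 := e_geom m hy
      rw [hd1, mul_zero] at h1
      have := ih (by omega)
      linarith
  intro y hy
  have := hdall y hy
  simp only [hd] at this
  linarith

/-! ### Total mass one -/

lemma eprob_true_one {N : ℕ} {p : ℝ} (hp0 : 0 < p) (hp1 : p < 1) :
    ∀ y : ℕ, y ≤ N → eprob N p (y : ℤ) (fun _ => True) = 1 := by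
  have hne : ∀ z : ℤ, ∀ S, eprob N p z S ≠ ∞ := fun z S => eprob_ne_top hp0.le hp1.le
  set T : ℕ → ℝ := fun y => (eprob N p (y : ℤ) (fun _ => True)).toReal with hT
  have hrec : ∀ y, y + 2 ≤ N → T (y + 1) = p * T (y + 2) + (1 - p) * T y := by
    intro y hy
    have hpos : (0 : ℤ) < ((y + 1 : ℕ) : ℤ) := by exact_mod_cast Nat.succ_pos y
    have hlt : ((y + 1 : ℕ) : ℤ) < (N : ℤ) := by exact_mod_cast (by omega : y + 1 < N)
    have h := eprob_rec (N := N) (p := p) hpos hlt (fun _ => True)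
    have c1 : ((y + 1 : ℕ) : ℤ) + 1 = ((y + 2 : ℕ) : ℤ) := by push_cast; ring
    have c2 : ((y + 1 : ℕ) : ℤ) - 1 = ((y : ℕ) : ℤ) := by push_cast; ring
    rw [c1, c2] at h
    simp only [hT]
    rw [h, ENNReal.toReal_add (ENNReal.mul_ne_top ENNReal.ofReal_ne_top (hne _ _))
        (ENNReal.mul_ne_top ENNReal.ofReal_ne_top (hne _ _)),
      ENNReal.toReal_mul, ENNReal.toReal_mul, ENNReal.toReal_ofReal hp0.le,
      ENNReal.toReal_ofReal (by linarith : (0:ℝ) ≤ 1 - p)]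
  have h0 : T 0 = 1 := by
    simp only [hT, Nat.cast_zero]
    rw [eprob_boundary_of (Or.inl rfl) trivial, ENNReal.toReal_one]
  have hNN : T N = 1 := by
    simp only [hT]
    rw [eprob_boundary_of (Or.inr rfl) trivial, ENNReal.toReal_one]
  have key := unique_rec hp0 hp1 hrec
    (g := fun _ => (1 : ℝ)) (fun y hy => by ring) h0 (by rw [hNN])
  intro y hy
  have hy1 := key y hy
  rw [← ENNReal.ofReal_toReal (hne (y : ℤ) _)]
  simp only [hT] at hy1
  rw [hy1, ENNReal.ofReal_one]

/-! ### Hitting events -/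

def hitsL (x a : ℤ) (w : List Bool) : Prop :=
  ∃ j, j ≤ w.length ∧ walkPos x (w.take j) = a


lemma hitsL_nil {x a : ℤ} : hitsL x a [] ↔ x = a := by
  constructor
  · rintro ⟨j, hj, hw⟩
    simp only [List.length_nil, Nat.le_zero] at hj
    subst hj
    rwa [List.take_nil, walkPos_nil'] at hw
  · rintro rfl
    exact ⟨0, Nat.zero_le _, by rw [List.take_zero]; exact walkPos_nil' x⟩

lemma hitsL_self (x : ℤ) (w : List Bool) : hitsL x x w :=
  ⟨0, Nat.zero_le _, by rw [List.take_zero]; exact walkPos_nil' x⟩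

lemma hitsL_cons_true {x a : ℤ} (h : x ≠ a) (w : List Bool) :
    hitsL x a (true :: w) ↔ hitsL (x + 1) a w := by
  constructor
  · rintro ⟨j, hj, hw⟩
    cases j with
    | zero => rw [List.take_zero, walkPos_nil'] at hw; exact absurd hw h
    | succ i =>
      rw [walkPos_take_cons_true] at hw
      exact ⟨i, by simpa using hj, hw⟩
  · rintro ⟨j, hj, hw⟩
    exact ⟨j + 1, by simpa using hj, by rwa [walkPos_take_cons_true]⟩

lemma hitsL_cons_false {x a : ℤ} (h : x ≠ a) (w : List Bool) :
    hitsL x a (false :: w) ↔ hitsL (x - 1) a w := by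
  constructor
  · rintro ⟨j, hj, hw⟩
    cases j with
    | zero => rw [List.take_zero, walkPos_nil'] at hw; exact absurd hw h
    | succ i =>
      rw [walkPos_take_cons_false] at hw
      exact ⟨i, by simpa using hj, hw⟩
  · rintro ⟨j, hj, hw⟩
    exact ⟨j + 1, by simpa using hj, by rwa [walkPos_take_cons_false]⟩

lemma rho_rec {p : ℝ} (hp0 : 0 < p) (m : ℕ) :
    ((1 - p) / p) ^ (m + 1) = p * ((1 - p) / p) ^ (m + 2) + (1 - p) * ((1 - p) / p) ^ m := by
  have key : p * ((1 - p) / p) ^ 2 + (1 - p) = (1 - p) / p := by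
    field_simp
    ring
  calc ((1 - p) / p) ^ (m + 1) = (p * ((1 - p) / p) ^ 2 + (1 - p)) * ((1 - p) / p) ^ m := by
        rw [key, pow_succ]; ring
    _ = p * ((1 - p) / p) ^ (m + 2) + (1 - p) * ((1 - p) / p) ^ m := by ring

lemma eprob_hit_up {N : ℕ} {p : ℝ} (hp : 1 / 2 < p) (hp1 : p < 1) {a : ℕ}
    (ha0 : 1 ≤ a) (haN : a ≤ N) :
    ∀ x : ℕ, x ≤ a →
      (eprob N p (x : ℤ) (hitsL (x : ℤ) (a : ℤ))).toReal
        = (1 - ((1 - p) / p) ^ x) / (1 - ((1 - p) / p) ^ a) := by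
  have hp0 : 0 < p := by linarith
  have hne : ∀ z : ℤ, ∀ S, eprob N p z S ≠ ∞ := fun z S => eprob_ne_top hp0.le hp1.le
  set ρ : ℝ := (1 - p) / p with hρ
  have hρ0 : 0 < ρ := div_pos (by linarith) hp0
  have hρ1 : ρ < 1 := by rw [hρ, div_lt_one hp0]; linarith
  have hden : 1 - ρ ^ a ≠ 0 := by
    have : ρ ^ a < 1 := pow_lt_one₀ hρ0.le hρ1 (by omega)
    linarith
  set f : ℕ → ℝ := fun y => (eprob N p (y : ℤ) (hitsL (y : ℤ) (a : ℤ))).toReal with hf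
  set g : ℕ → ℝ := fun y => (1 - ρ ^ y) / (1 - ρ ^ a) with hg
  have hfrec : ∀ y, y + 2 ≤ a → f (y + 1) = p * f (y + 2) + (1 - p) * f y := by
    intro y hy
    have hpos : (0 : ℤ) < ((y + 1 : ℕ) : ℤ) := by exact_mod_cast Nat.succ_pos y
    have hlt : ((y + 1 : ℕ) : ℤ) < (N : ℤ) := by exact_mod_cast (by omega : y + 1 < N)
    have hxa : ((y + 1 : ℕ) : ℤ) ≠ (a : ℤ) := by exact_mod_cast (by omega : y + 1 ≠ a)
    have h := eprob_rec (N := N) (p := p) hpos hlt (hitsL ((y + 1 : ℕ) : ℤ) (a : ℤ))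
    have c1 : ((y + 1 : ℕ) : ℤ) + 1 = ((y + 2 : ℕ) : ℤ) := by push_cast; ring
    have c2 : ((y + 1 : ℕ) : ℤ) - 1 = ((y : ℕ) : ℤ) := by push_cast; ring
    have e1 : eprob N p (((y + 1 : ℕ) : ℤ) + 1) (fun w => hitsL ((y + 1 : ℕ) : ℤ) (a : ℤ) (true :: w))
        = eprob N p ((y + 2 : ℕ) : ℤ) (hitsL ((y + 2 : ℕ) : ℤ) (a : ℤ)) := by
      rw [c1]
      apply eprob_congr_iff'
      intro w
      rw [hitsL_cons_true hxa w, ← c1]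
    have e2 : eprob N p (((y + 1 : ℕ) : ℤ) - 1) (fun w => hitsL ((y + 1 : ℕ) : ℤ) (a : ℤ) (false :: w))
        = eprob N p ((y : ℕ) : ℤ) (hitsL ((y : ℕ) : ℤ) (a : ℤ)) := by
      rw [c2]
      apply eprob_congr_iff'
      intro w
      rw [hitsL_cons_false hxa w, ← c2]
    rw [e1, e2] at h
    simp only [hf]
    rw [h, ENNReal.toReal_add (ENNReal.mul_ne_top ENNReal.ofReal_ne_top (hne _ _))
        (ENNReal.mul_ne_top ENNReal.ofReal_ne_top (hne _ _)),
      ENNReal.toReal_mul, ENNReal.toReal_mul, ENNReal.toReal_ofReal hp0.le,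
      ENNReal.toReal_ofReal (by linarith : (0:ℝ) ≤ 1 - p)]
  have hgrec : ∀ y, y + 2 ≤ a → g (y + 1) = p * g (y + 2) + (1 - p) * g y := by
    intro y hy
    simp only [hg]
    have hr := rho_rec hp0 y
    rw [mul_div_assoc', mul_div_assoc', ← add_div]
    congr 1
    linear_combination -hr
  have hf0 : f 0 = 0 := by
    simp only [hf, Nat.cast_zero]
    rw [eprob_boundary_not (Or.inl rfl) (fun hc => by
      have := hitsL_nil.mp hc
      exact absurd this.symm (by exact_mod_cast (by omega : ¬ (a : ℤ) = 0)))]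
    exact ENNReal.toReal_zero
  have hfa : f a = 1 := by
    simp only [hf]
    have : eprob N p (a : ℤ) (hitsL (a : ℤ) (a : ℤ)) = eprob N p (a : ℤ) (fun _ => True) := by
      apply eprob_congr_iff'
      intro w
      exact iff_of_true (hitsL_self _ _) trivial
    rw [this, eprob_true_one hp0 hp1 a haN, ENNReal.toReal_one]
  have hg0 : g 0 = 0 := by simp [hg]
  have hga : g a = 1 := by
    simp only [hg]
    rw [div_self hden]
  have h00 : f 0 = g 0 := by rw [hf0, hg0]
  have haa : f a = g a := by rw [hfa, hga]
  exact unique_rec hp0 hp1 hfrec hgrec h00 haa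

lemma eprob_hit_down {N : ℕ} {p : ℝ} (hp : 1 / 2 < p) (hp1 : p < 1) {b : ℕ}
    (hbN : b + 1 ≤ N) :
    ∀ x : ℕ, b ≤ x → x ≤ N →
      (eprob N p (x : ℤ) (hitsL (x : ℤ) (b : ℤ))).toReal
        = (((1 - p) / p) ^ x - ((1 - p) / p) ^ N) / (((1 - p) / p) ^ b - ((1 - p) / p) ^ N) := by
  have hp0 : 0 < p := by linarith
  have hne : ∀ z : ℤ, ∀ S, eprob N p z S ≠ ∞ := fun z S => eprob_ne_top hp0.le hp1.le
  set ρ : ℝ := (1 - p) / p with hρ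
  have hρ0 : 0 < ρ := div_pos (by linarith) hp0
  have hρ1 : ρ < 1 := by rw [hρ, div_lt_one hp0]; linarith
  have hden : ρ ^ b - ρ ^ N ≠ 0 := by
    have : ρ ^ N < ρ ^ b := pow_lt_pow_right_of_lt_one₀ hρ0 hρ1 (by omega)
    linarith
  set f : ℕ → ℝ := fun y => (eprob N p ((b + y : ℕ) : ℤ) (hitsL ((b + y : ℕ) : ℤ) (b : ℤ))).toReal with hf
  set g : ℕ → ℝ := fun y => (ρ ^ (b + y) - ρ ^ N) / (ρ ^ b - ρ ^ N) with hg
  have hfrec : ∀ y, y + 2 ≤ N - b → f (y + 1) = p * f (y + 2) + (1 - p) * f y := by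
    intro y hy
    have hpos : (0 : ℤ) < ((b + (y + 1) : ℕ) : ℤ) := by exact_mod_cast (by omega : 0 < b + (y + 1))
    have hlt : ((b + (y + 1) : ℕ) : ℤ) < (N : ℤ) := by exact_mod_cast (by omega : b + (y + 1) < N)
    have hxb : ((b + (y + 1) : ℕ) : ℤ) ≠ (b : ℤ) := by exact_mod_cast (by omega : b + (y + 1) ≠ b)
    have h := eprob_rec (N := N) (p := p) hpos hlt (hitsL ((b + (y + 1) : ℕ) : ℤ) (b : ℤ))
    have c1 : ((b + (y + 1) : ℕ) : ℤ) + 1 = ((b + (y + 2) : ℕ) : ℤ) := by push_cast; ring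
    have c2 : ((b + (y + 1) : ℕ) : ℤ) - 1 = ((b + y : ℕ) : ℤ) := by push_cast; ring
    have e1 : eprob N p (((b + (y + 1) : ℕ) : ℤ) + 1)
          (fun w => hitsL ((b + (y + 1) : ℕ) : ℤ) (b : ℤ) (true :: w))
        = eprob N p ((b + (y + 2) : ℕ) : ℤ) (hitsL ((b + (y + 2) : ℕ) : ℤ) (b : ℤ)) := by
      rw [c1]
      apply eprob_congr_iff'
      intro w
      rw [hitsL_cons_true hxb w, ← c1]
    have e2 : eprob N p (((b + (y + 1) : ℕ) : ℤ) - 1)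
          (fun w => hitsL ((b + (y + 1) : ℕ) : ℤ) (b : ℤ) (false :: w))
        = eprob N p ((b + y : ℕ) : ℤ) (hitsL ((b + y : ℕ) : ℤ) (b : ℤ)) := by
      rw [c2]
      apply eprob_congr_iff'
      intro w
      rw [hitsL_cons_false hxb w, ← c2]
    rw [e1, e2] at h
    simp only [hf]
    rw [show b + (y + 1) = b + (y + 1) from rfl] at h
    rw [h, ENNReal.toReal_add (ENNReal.mul_ne_top ENNReal.ofReal_ne_top (hne _ _))
        (ENNReal.mul_ne_top ENNReal.ofReal_ne_top (hne _ _)),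
      ENNReal.toReal_mul, ENNReal.toReal_mul, ENNReal.toReal_ofReal hp0.le,
      ENNReal.toReal_ofReal (by linarith : (0:ℝ) ≤ 1 - p)]
  have hgrec : ∀ y, y + 2 ≤ N - b → g (y + 1) = p * g (y + 2) + (1 - p) * g y := by
    intro y hy
    simp only [hg]
    have hr := rho_rec hp0 (b + y)
    rw [show b + (y + 1) = (b + y) + 1 from by omega, show b + (y + 2) = (b + y) + 2 from by omega]
    rw [mul_div_assoc', mul_div_assoc', ← add_div]
    congr 1
    linear_combination hr
  have hf0 : f 0 = 1 := by
    simp only [hf]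
    have : eprob N p ((b + 0 : ℕ) : ℤ) (hitsL ((b + 0 : ℕ) : ℤ) (b : ℤ))
        = eprob N p ((b + 0 : ℕ) : ℤ) (fun _ => True) := by
      apply eprob_congr_iff'
      intro w
      have : ((b + 0 : ℕ) : ℤ) = (b : ℤ) := by norm_num
      exact iff_of_true (this ▸ hitsL_self _ _) trivial
    rw [this, eprob_true_one hp0 hp1 (b + 0) (by omega), ENNReal.toReal_one]
  have hfn : f (N - b) = 0 := by
    simp only [hf]
    have hc : ((b + (N - b) : ℕ) : ℤ) = (N : ℤ) := by rw [show b + (N - b) = N from by omega]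
    rw [hc]
    rw [eprob_boundary_not (Or.inr rfl) (fun hcon => by
      have := hitsL_nil.mp hcon
      exact absurd this (by exact_mod_cast (by omega : ¬ (N : ℤ) = (b : ℤ))))]
    exact ENNReal.toReal_zero
  have hg0 : g 0 = 1 := by
    simp only [hg]
    rw [Nat.add_zero, div_self hden]
  have hgn : g (N - b) = 0 := by
    simp only [hg]
    rw [show b + (N - b) = N from by omega]
    simp
  have h00 : f 0 = g 0 := by rw [hf0, hg0]
  have hnn : f (N - b) = g (N - b) := by rw [hfn, hgn]
  have key := unique_rec hp0 hp1 hfrec hgrec h00 hnn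
  intro x hbx hxN
  have hx : x - b ≤ N - b := by omega
  have := key (x - b) hx
  simp only [hf, hg] at this
  rw [show b + (x - b) = x from by omega] at this
  exact this

/-! ### Discrete IVT and range facts -/

lemma walkPos_step {x : ℤ} {w : List Bool} {t : ℕ} (ht : t < w.length) :
    walkPos x (w.take (t + 1)) = walkPos x (w.take t) + 1 ∨
      walkPos x (w.take (t + 1)) = walkPos x (w.take t) - 1 := by
  rw [List.take_succ, List.getElem?_eq_getElem ht]
  cases hb : w[t] with
  | true =>
    left
    simp [walkPos, List.count_append]
    ring
  | false =>
    right
    simp [walkPos, List.count_append]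
    ring

lemma ivt_aux {f : ℕ → ℤ} {m : ℕ}
    (hstep : ∀ t, t < m → f (t + 1) = f t + 1 ∨ f (t + 1) = f t - 1) (L : ℤ) :
    ∀ d i j, i ≤ m → j ≤ m → (i + d = j ∨ j + d = i) → f i ≤ L → L ≤ f j →
      ∃ t, t ≤ m ∧ f t = L := by
  intro d
  induction d with
  | zero =>
    intro i j him hjm hd h1 h2
    have hij : i = j := by omega
    subst hij
    exact ⟨i, him, le_antisymm h1 h2⟩
  | succ d ih =>
    intro i j him hjm hd h1 h2
    rcases hd with hd | hd
    · rcases le_or_gt (f (i + 1)) L with hL | hL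
      · exact ih (i + 1) j (by omega) hjm (Or.inl (by omega)) hL h2
      · rcases hstep i (by omega) with hs | hs <;> exact ⟨i, him, by omega⟩
    · rcases le_or_gt L (f (j + 1)) with hL | hL
      · exact ih i (j + 1) him (by omega) (Or.inr (by omega)) h1 hL
      · rcases hstep j (by omega) with hs | hs <;> exact ⟨j, hjm, by omega⟩

lemma walk_ivt {x : ℤ} {w : List Bool} {L : ℤ} {i j : ℕ}
    (hi : i ≤ w.length) (hj : j ≤ w.length)
    (h1 : walkPos x (w.take i) ≤ L) (h2 : L ≤ walkPos x (w.take j)) :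
    hitsL x L w := by
  have hstep : ∀ t, t < w.length →
      walkPos x (w.take (t + 1)) = walkPos x (w.take t) + 1 ∨
        walkPos x (w.take (t + 1)) = walkPos x (w.take t) - 1 :=
    fun t ht => walkPos_step ht
  rcases le_total i j with hij | hij
  · obtain ⟨t, ht, hf⟩ := ivt_aux (f := fun t => walkPos x (w.take t)) (m := w.length)
      hstep L (j - i) i j hi hj (Or.inl (by omega)) h1 h2
    exact ⟨t, ht, hf⟩
  · obtain ⟨t, ht, hf⟩ := ivt_aux (f := fun t => walkPos x (w.take t)) (m := w.length)
      hstep L (i - j) i j hi hj (Or.inr (by omega)) h1 h2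
    exact ⟨t, ht, hf⟩

lemma pos_take_zero (x : ℤ) (w : List Bool) : walkPos x (w.take 0) = x := by
  rw [List.take_zero]
  exact walkPos_nil' x

lemma exit_pos_bounds {N : ℕ} {x : ℤ} {w : List Bool} (h : IsExitPath N x w) :
    ∀ t, t ≤ w.length → 0 ≤ walkPos x (w.take t) ∧ walkPos x (w.take t) ≤ (N : ℤ) := by
  intro t ht
  rcases lt_or_eq_of_le ht with hlt | heq
  · have := h.1 t hlt
    omega
  · subst heq
    rw [List.take_length]
    rcases h.2 with he | he <;> rw [he] <;> omega

lemma hits_final {x : ℤ} {w : List Bool} :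
    hitsL x (walkPos x w) w :=
  ⟨w.length, le_refl _, by rw [List.take_length]⟩

lemma mem_rangeSet {x L : ℤ} {w : List Bool} : L ∈ rangeSet x w ↔ hitsL x L w := by
  simp only [rangeSet, Finset.mem_image, Finset.mem_range]
  constructor
  · rintro ⟨k, hk, hw⟩
    exact ⟨k, by omega, hw⟩
  · rintro ⟨j, hj, hw⟩
    exact ⟨j, by omega, hw⟩

lemma hits_interval {x u v : ℤ} {w : List Bool} (hu : hitsL x u w) (hv : hitsL x v w) :
    ∀ L, u ≤ L → L ≤ v → hitsL x L w := by
  obtain ⟨i, hi, hwi⟩ := hu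
  obtain ⟨j, hj, hwj⟩ := hv
  intro L h1 h2
  exact walk_ivt hi hj (by omega) (by omega)

lemma rangeCount_ge {x : ℤ} {w : List Bool} {lo hi : ℤ} (hlh : lo ≤ hi)
    (hhit : ∀ L, lo ≤ L → L ≤ hi → hitsL x L w) :
    hi - lo + 1 ≤ (rangeCount x w : ℤ) := by
  have hsub : Finset.Icc lo hi ⊆ rangeSet x w := by
    intro L hL
    rw [Finset.mem_Icc] at hL
    exact mem_rangeSet.mpr (hhit L hL.1 hL.2)
  have hcard := Finset.card_le_card hsub
  rw [Int.card_Icc] at hcard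
  rw [rangeCount]
  omega

lemma rangeCount_le {x : ℤ} {w : List Bool} {lo hi : ℤ}
    (h : ∀ t, t ≤ w.length → lo ≤ walkPos x (w.take t) ∧ walkPos x (w.take t) ≤ hi) :
    (rangeCount x w : ℤ) ≤ hi - lo + 1 := by
  have h0 := h 0 (Nat.zero_le _)
  have hsub : rangeSet x w ⊆ Finset.Icc lo hi := by
    intro L hL
    obtain ⟨j, hj, hw⟩ := mem_rangeSet.mp hL
    rw [Finset.mem_Icc]
    have := h j hj
    omega
  have hcard := Finset.card_le_card hsub
  rw [Int.card_Icc] at hcard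
  rw [rangeCount]
  omega

/-! ### Event equivalences -/

section equivs
variable {N k : ℕ} {x : ℤ} {w : List Bool}

lemma hits_start : hitsL x x w := hitsL_self x w

-- helper: on exit-at-0 paths, some position reaches level `c ≥ 0` if range is big
lemma hit_of_big_range_low (hex : IsExitPath N x w) (he : walkPos x w = 0)
    {c : ℤ} (hc : 0 ≤ c) (hR : c + 1 ≤ (rangeCount x w : ℤ)) : hitsL x c w := by
  by_contra hno
  have hall : ∀ t, t ≤ w.length → 0 ≤ walkPos x (w.take t) ∧ walkPos x (w.take t) ≤ c - 1 := by
    intro t ht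
    refine ⟨(exit_pos_bounds hex t ht).1, ?_⟩
    by_contra hgt
    push_neg at hgt
    refine hno (walk_ivt (i := w.length) (j := t) (le_refl _) ht ?_ (by omega))
    rw [List.take_length, he]
    omega
  have := rangeCount_le hall
  omega

lemma hit_of_big_range_high (hex : IsExitPath N x w) (he : walkPos x w = (N : ℤ))
    {c : ℤ} (hc : c ≤ (N : ℤ)) (hR : (N : ℤ) - c + 1 ≤ (rangeCount x w : ℤ)) :
    hitsL x c w := by
  by_contra hno
  have hall : ∀ t, t ≤ w.length → c + 1 ≤ walkPos x (w.take t) ∧ walkPos x (w.take t) ≤ (N : ℤ) := by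
    intro t ht
    refine ⟨?_, (exit_pos_bounds hex t ht).2⟩
    by_contra hgt
    push_neg at hgt
    refine hno (walk_ivt (i := t) (j := w.length) ht (le_refl _) (by omega) ?_)
    rw [List.take_length, he]
    omega
  have := rangeCount_le hall
  omega

lemma equiv_case1 (hex : IsExitPath N x w) (hk1 : 1 ≤ k)
    (ha : (k : ℤ) - 1 ≤ x) (hb : x ≤ (N : ℤ) + 1 - k) :
    k ≤ rangeCount x w := by
  have h0x := (exit_pos_bounds hex 0 (Nat.zero_le _))
  rw [pos_take_zero] at h0x
  rcases hex.2 with he | he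
  · have h0 : hitsL x 0 w := he ▸ hits_final
    have hall := hits_interval h0 hits_start
    have := rangeCount_ge (lo := 0) (hi := x) (by omega) hall
    omega
  · have hN : hitsL x (N : ℤ) w := he ▸ hits_final
    have hall := hits_interval hits_start hN
    have := rangeCount_ge (lo := x) (hi := (N : ℤ)) (by omega) hall
    omega

lemma equiv_case2 (hex : IsExitPath N x w) (hk1 : 1 ≤ k)
    (hxa : x ≤ (k : ℤ) - 1) (hxb : x ≤ (N : ℤ) + 1 - k) (haN : (k : ℤ) - 1 ≤ (N : ℤ)) :
    k ≤ rangeCount x w ↔ hitsL x ((k : ℤ) - 1) w := by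
  have h0x := (exit_pos_bounds hex 0 (Nat.zero_le _))
  rw [pos_take_zero] at h0x
  constructor
  · intro hR
    rcases hex.2 with he | he
    · exact hit_of_big_range_low hex he (by omega) (by omega)
    · refine walk_ivt (i := 0) (j := w.length) (Nat.zero_le _) (le_refl _) ?_ ?_
      · rw [pos_take_zero]; omega
      · rw [List.take_length, he]; omega
  · intro hhit
    rcases hex.2 with he | he
    · have h0 : hitsL x 0 w := he ▸ hits_final
      have hall := hits_interval h0 hhit
      have := rangeCount_ge (lo := 0) (hi := (k : ℤ) - 1) (by omega) hall
      omega
    · have hN : hitsL x (N : ℤ) w := he ▸ hits_final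
      have hall := hits_interval hits_start hN
      have := rangeCount_ge (lo := x) (hi := (N : ℤ)) (by omega) hall
      omega

lemma equiv_case3 (hex : IsExitPath N x w) (hk1 : 1 ≤ k) (hkN : k ≤ N + 1)
    (hbx : (N : ℤ) + 1 - k ≤ x) (hax : (k : ℤ) - 1 ≤ x) :
    k ≤ rangeCount x w ↔ hitsL x ((N : ℤ) + 1 - k) w := by
  have h0x := (exit_pos_bounds hex 0 (Nat.zero_le _))
  rw [pos_take_zero] at h0x
  constructor
  · intro hR
    rcases hex.2 with he | he
    · refine walk_ivt (i := w.length) (j := 0) (le_refl _) (Nat.zero_le _) ?_ ?_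
      · rw [List.take_length, he]; omega
      · rw [pos_take_zero]; omega
    · exact hit_of_big_range_high hex he (by omega) (by omega)
  · intro hhit
    rcases hex.2 with he | he
    · have h0 : hitsL x 0 w := he ▸ hits_final
      have hall := hits_interval h0 hits_start
      have := rangeCount_ge (lo := 0) (hi := x) (by omega) hall
      omega
    · have hN : hitsL x (N : ℤ) w := he ▸ hits_final
      have hall := hits_interval hhit hN
      have := rangeCount_ge (lo := (N : ℤ) + 1 - k) (hi := (N : ℤ)) (by omega) hall
      omega

lemma equiv_case4 (hex : IsExitPath N x w) (hk1 : 1 ≤ k)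
    (hbx : (N : ℤ) + 1 - k ≤ x) (hxa : x ≤ (k : ℤ) - 1)
    (hb0 : 0 ≤ (N : ℤ) + 1 - k) (haN : (k : ℤ) - 1 ≤ (N : ℤ)) :
    k ≤ rangeCount x w ↔ (hitsL x ((k : ℤ) - 1) w ∧ hitsL x ((N : ℤ) + 1 - k) w) := by
  have h0x := (exit_pos_bounds hex 0 (Nat.zero_le _))
  rw [pos_take_zero] at h0x
  constructor
  · intro hR
    rcases hex.2 with he | he
    · refine ⟨hit_of_big_range_low hex he (by omega) (by omega), ?_⟩
      refine walk_ivt (i := w.length) (j := 0) (le_refl _) (Nat.zero_le _) ?_ ?_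
      · rw [List.take_length, he]; omega
      · rw [pos_take_zero]; omega
    · refine ⟨?_, hit_of_big_range_high hex he (by omega) (by omega)⟩
      refine walk_ivt (i := 0) (j := w.length) (Nat.zero_le _) (le_refl _) ?_ ?_
      · rw [pos_take_zero]; omega
      · rw [List.take_length, he]; omega
  · rintro ⟨hha, hhb⟩
    rcases hex.2 with he | he
    · have h0 : hitsL x 0 w := he ▸ hits_final
      have hall := hits_interval h0 hha
      have := rangeCount_ge (lo := 0) (hi := (k : ℤ) - 1) (by omega) hall
      omega
    · have hN : hitsL x (N : ℤ) w := he ▸ hits_final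
      have hall := hits_interval hhb hN
      have := rangeCount_ge (lo := (N : ℤ) + 1 - k) (hi := (N : ℤ)) (by omega) hall
      omega

lemma union_case4 (hex : IsExitPath N x w)
    (hbx : (N : ℤ) + 1 - k ≤ x) (hxa : x ≤ (k : ℤ) - 1)
    (hb0 : 0 ≤ (N : ℤ) + 1 - k) (haN : (k : ℤ) - 1 ≤ (N : ℤ)) :
    hitsL x ((k : ℤ) - 1) w ∨ hitsL x ((N : ℤ) + 1 - k) w := by
  have h0x := (exit_pos_bounds hex 0 (Nat.zero_le _))
  rw [pos_take_zero] at h0x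
  rcases hex.2 with he | he
  · right
    refine walk_ivt (i := w.length) (j := 0) (le_refl _) (Nat.zero_le _) ?_ ?_
    · rw [List.take_length, he]; omega
    · rw [pos_take_zero]; omega
  · left
    refine walk_ivt (i := 0) (j := w.length) (Nat.zero_le _) (le_refl _) ?_ ?_
    · rw [pos_take_zero]; omega
    · rw [List.take_length, he]; omega

end equivs

/-! ### Limits -/

lemma tendsto_floor_div {a : ℝ} (ha : 0 ≤ a) :
    Tendsto (fun N : ℕ => ((⌊a * (N : ℝ)⌋₊ : ℝ)) / (N : ℝ)) atTop (𝓝 a) :=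
  (tendsto_nat_floor_mul_div_atTop ha).comp tendsto_natCast_atTop_atTop

lemma tendsto_ceil_div {a : ℝ} (ha : 0 ≤ a) :
    Tendsto (fun N : ℕ => ((⌈a * (N : ℝ)⌉₊ : ℝ)) / (N : ℝ)) atTop (𝓝 a) :=
  (tendsto_nat_ceil_mul_div_atTop ha).comp tendsto_natCast_atTop_atTop

lemma rho_pow_tendsto {c : ℝ} (hc : 0 < c) {m : ℕ → ℕ} {γ : ℝ}
    (hm : Tendsto (fun N : ℕ => (m N : ℝ) / (N : ℝ)) atTop (𝓝 γ)) :
    Tendsto (fun N : ℕ => ((1 - (1 / 2 + c / (N : ℝ))) / (1 / 2 + c / (N : ℝ))) ^ m N)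
      atTop (𝓝 (Real.exp (-4 * c * γ))) := by
  set ρ : ℕ → ℝ := fun N => (1 - (1 / 2 + c / (N : ℝ))) / (1 / 2 + c / (N : ℝ)) with hρdef
  have hev : ∀ᶠ N : ℕ in atTop, 2 * c < (N : ℝ) :=
    tendsto_natCast_atTop_atTop.eventually_gt_atTop (2 * c)
  have hρ_eq : ∀ᶠ N : ℕ in atTop, ρ N = (1 + (-(2 * c)) / (N : ℝ)) / (1 + 2 * c / (N : ℝ)) := by
    filter_upwards [hev] with N hN
    have hN0 : (N : ℝ) ≠ 0 := by nlinarith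
    simp only [hρdef]
    rw [div_eq_div_iff]
    · field_simp
      ring
    · have h1 : 0 < c / (N : ℝ) := div_pos hc (by nlinarith)
      have h2 : c / (N : ℝ) < 1 / 2 := by
        rw [div_lt_iff₀ (by nlinarith : (0:ℝ) < (N:ℝ))]
        nlinarith
      linarith
    · have h2 : 0 < 2 * c / (N : ℝ) := div_pos (by linarith) (by nlinarith)
      linarith
  have hρpos : ∀ᶠ N : ℕ in atTop, 0 < ρ N := by
    filter_upwards [hev] with N hN
    have hN0 : (0 : ℝ) < (N : ℝ) := by nlinarith
    simp only [hρdef]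
    apply div_pos
    · have h2 : c / (N : ℝ) < 1 / 2 := by
        rw [div_lt_iff₀ hN0]
        nlinarith
      linarith
    · have h1 : 0 < c / (N : ℝ) := div_pos hc hN0
      linarith
  have hpowN : Tendsto (fun N : ℕ => ρ N ^ N) atTop
      (𝓝 (Real.exp (-(2 * c)) / Real.exp (2 * c))) := by
    have h1 := Real.tendsto_one_add_div_pow_exp (-(2 * c))
    have h2 := Real.tendsto_one_add_div_pow_exp (2 * c)
    have h3 := h1.div h2 (Real.exp_ne_zero _)
    apply h3.congr'
    filter_upwards [hρ_eq] with N hN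
    rw [Pi.div_apply, hN, div_pow]
  have hlog : Tendsto (fun N : ℕ => (N : ℝ) * Real.log (ρ N)) atTop (𝓝 (-(4 * c))) := by
    have hne : Real.exp (-(2 * c)) / Real.exp (2 * c) ≠ 0 :=
      div_ne_zero (Real.exp_ne_zero _) (Real.exp_ne_zero _)
    have hcont := (Real.continuousAt_log hne).tendsto.comp hpowN
    have hval : Real.log (Real.exp (-(2 * c)) / Real.exp (2 * c)) = -(4 * c) := by
      rw [Real.log_div (Real.exp_ne_zero _) (Real.exp_ne_zero _), Real.log_exp, Real.log_exp]
      ring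
    rw [hval] at hcont
    apply hcont.congr
    intro N
    simp only [Function.comp_apply]
    rw [Real.log_pow]
  have hmul : Tendsto (fun N : ℕ => (m N : ℝ) * Real.log (ρ N)) atTop (𝓝 (γ * -(4 * c))) := by
    have h5 := hm.mul hlog
    apply h5.congr'
    filter_upwards [hev] with N hN
    have hN0 : (N : ℝ) ≠ 0 := by nlinarith
    field_simp
  have hexp := (Real.continuous_exp.tendsto _).comp hmul
  have hval : γ * -(4 * c) = -4 * c * γ := by ring
  rw [hval] at hexp
  apply hexp.congr'
  filter_upwards [hρpos] with N hN
  simp only [Function.comp_apply]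
  rw [← Real.log_pow, Real.exp_log (pow_pos hN _)]

/-! ### Case formulas -/

section cases
variable {c α β : ℝ}

lemma F_case1 (hc : 0 < c) (hα0 : 0 < α) (hα1 : α < 1) (hβ0 : 0 < β)
    (hβα : β ≤ α) (hβ1α : β ≤ 1 - α) {N : ℕ}
    (h2c : 2 * c < (N : ℝ)) (hk1 : 1 ≤ β * (N : ℝ)) :
    prob N (1/2 + c/(N:ℝ)) ⌊α * (N:ℝ)⌋
      (fun w => β * (N:ℝ) ≤ (rangeCount ⌊α * (N:ℝ)⌋ w : ℝ)) = 1 := by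
  have hN0 : (0:ℝ) < (N:ℝ) := by nlinarith
  set p := 1/2 + c/(N:ℝ) with hp
  have hcN : 0 < c / (N:ℝ) := div_pos hc hN0
  have hcN2 : c/(N:ℝ) < 1/2 := by rw [div_lt_iff₀ hN0]; nlinarith
  have hp0 : 0 < p := by rw [hp]; linarith
  have hp1 : p < 1 := by rw [hp]; linarith
  set xn := ⌊α * (N:ℝ)⌋₊ with hxn
  set knn := ⌈β * (N:ℝ)⌉₊ with hknn
  have hxint : ⌊α * (N:ℝ)⌋ = ((xn : ℕ) : ℤ) :=
    (Int.natCast_floor_eq_floor (mul_nonneg hα0.le (Nat.cast_nonneg N))).symm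
  have hxle : (xn:ℝ) ≤ α * N := Nat.floor_le (mul_nonneg hα0.le (Nat.cast_nonneg N))
  have hxgt : α * N < xn + 1 := Nat.lt_floor_add_one _
  have hkge : β * N ≤ knn := Nat.le_ceil _
  have hklt : (knn:ℝ) < β * N + 1 := Nat.ceil_lt_add_one (mul_nonneg hβ0.le (Nat.cast_nonneg N))
  have hk1' : 1 ≤ knn := by
    rw [hknn]
    exact Nat.ceil_pos.mpr (by nlinarith)
  have hxN : xn < N := by
    have hr : (xn:ℝ) < (N:ℝ) := lt_of_le_of_lt hxle (by nlinarith)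
    exact_mod_cast hr
  have hkxn : knn ≤ xn + 1 := by
    have hαβN : β * N ≤ α * N := by nlinarith
    have hr : (knn : ℝ) < ((xn + 2 : ℕ) : ℝ) := by push_cast; linarith
    have := Nat.cast_lt (α := ℝ) |>.mp hr
    omega
  have hxkn : xn + knn ≤ N + 1 := by
    have hαβN : α * N + β * N ≤ (N:ℝ) := by nlinarith
    have hr : ((xn + knn : ℕ) : ℝ) < ((N + 1 : ℕ) : ℝ) := by push_cast; linarith
    have := Nat.cast_lt (α := ℝ) |>.mp hr
    omega
  rw [hxint, prob_eq_toReal _ hp0.le hp1.le]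
  have hcongr : eprob N p ((xn : ℕ) : ℤ) (fun w => β * (N:ℝ) ≤ (rangeCount ((xn : ℕ) : ℤ) w : ℝ))
      = eprob N p ((xn : ℕ) : ℤ) (fun _ => True) := by
    apply eprob_congr_iff
    intro w hex
    refine iff_of_true ?_ trivial
    have hcount := equiv_case1 (k := knn) hex hk1' (by push_cast; omega) (by push_cast; omega)
    calc β * (N:ℝ) ≤ (knn:ℝ) := hkge
      _ ≤ (rangeCount ((xn : ℕ) : ℤ) w : ℝ) := by exact_mod_cast hcount
  rw [hcongr, eprob_true_one hp0 hp1 xn (by omega), ENNReal.toReal_one]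

lemma F_case2 (hc : 0 < c) (hα0 : 0 < α) (hα1 : α < 1) (hβ0 : 0 < β)
    (hβ1α : β ≤ 1 - α) {N : ℕ}
    (h2c : 2 * c < (N : ℝ)) (hk2 : 2 ≤ β * (N : ℝ)) (hgap : α * (N:ℝ) + 2 ≤ β * (N:ℝ)) :
    prob N (1/2 + c/(N:ℝ)) ⌊α * (N:ℝ)⌋
      (fun w => β * (N:ℝ) ≤ (rangeCount ⌊α * (N:ℝ)⌋ w : ℝ))
      = (1 - ((1 - (1/2 + c/(N:ℝ)))/(1/2 + c/(N:ℝ))) ^ ⌊α * (N:ℝ)⌋₊)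
        / (1 - ((1 - (1/2 + c/(N:ℝ)))/(1/2 + c/(N:ℝ))) ^ (⌈β * (N:ℝ)⌉₊ - 1)) := by
  have hN0 : (0:ℝ) < (N:ℝ) := by nlinarith
  set p := 1/2 + c/(N:ℝ) with hp
  have hcN : 0 < c / (N:ℝ) := div_pos hc hN0
  have hcN2 : c/(N:ℝ) < 1/2 := by rw [div_lt_iff₀ hN0]; nlinarith
  have hp0 : 0 < p := by rw [hp]; linarith
  have hp1 : p < 1 := by rw [hp]; linarith
  have hphalf : 1/2 < p := by rw [hp]; linarith
  set xn := ⌊α * (N:ℝ)⌋₊ with hxn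
  set knn := ⌈β * (N:ℝ)⌉₊ with hknn
  have hxint : ⌊α * (N:ℝ)⌋ = ((xn : ℕ) : ℤ) :=
    (Int.natCast_floor_eq_floor (mul_nonneg hα0.le (Nat.cast_nonneg N))).symm
  have hxle : (xn:ℝ) ≤ α * N := Nat.floor_le (mul_nonneg hα0.le (Nat.cast_nonneg N))
  have hxgt : α * N < xn + 1 := Nat.lt_floor_add_one _
  have hkge : β * N ≤ knn := Nat.le_ceil _
  have hklt : (knn:ℝ) < β * N + 1 := Nat.ceil_lt_add_one (mul_nonneg hβ0.le (Nat.cast_nonneg N))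
  have hk1' : 1 ≤ knn := by
    rw [hknn]
    exact Nat.ceil_pos.mpr (by nlinarith)
  have hxN : xn < N := by
    have hr : (xn:ℝ) < (N:ℝ) := lt_of_le_of_lt hxle (by nlinarith)
    exact_mod_cast hr
  have hk2' : 2 ≤ knn := by
    have hr : ((2:ℕ):ℝ) ≤ (knn:ℝ) := by push_cast; linarith
    exact_mod_cast hr
  have hxa : xn + 2 ≤ knn := by
    have hr : ((xn + 2 : ℕ) : ℝ) ≤ (knn:ℝ) := by push_cast; linarith
    exact_mod_cast hr
  have hkN : knn ≤ N := by
    have hαN : 0 < α * N := by positivity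
    have hr : (knn:ℝ) < ((N + 1 : ℕ) : ℝ) := by push_cast; nlinarith
    have := Nat.cast_lt (α := ℝ) |>.mp hr
    omega
  have hxkn : xn + knn ≤ N + 1 := by
    have hαβN : α * N + β * N ≤ (N:ℝ) := by nlinarith
    have hr : ((xn + knn : ℕ) : ℝ) < ((N + 1 : ℕ) : ℝ) := by push_cast; linarith
    have := Nat.cast_lt (α := ℝ) |>.mp hr
    omega
  rw [hxint, prob_eq_toReal _ hp0.le hp1.le]
  have hcast : (((knn - 1 : ℕ)) : ℤ) = (knn : ℤ) - 1 := by omega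
  have hcongr : eprob N p ((xn : ℕ) : ℤ) (fun w => β * (N:ℝ) ≤ (rangeCount ((xn : ℕ) : ℤ) w : ℝ))
      = eprob N p ((xn : ℕ) : ℤ) (hitsL ((xn : ℕ) : ℤ) (((knn - 1 : ℕ)) : ℤ)) := by
    apply eprob_congr_iff
    intro w hex
    have heq := equiv_case2 (k := knn) hex hk1' (by push_cast; omega) (by push_cast; omega)
      (by push_cast; omega)
    have h2 : knn ≤ rangeCount ((xn : ℕ) : ℤ) w ↔ hitsL ((xn : ℕ) : ℤ) (((knn - 1 : ℕ)) : ℤ) w := by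
      rw [hcast]; exact heq
    exact (Nat.ceil_le).symm.trans h2
  rw [hcongr]
  exact eprob_hit_up hphalf hp1 (a := knn - 1) (by omega) (by omega) xn (by omega)

lemma F_case3 (hc : 0 < c) (hα0 : 0 < α) (hα1 : α < 1) (hβ0 : 0 < β)
    (hβα : β ≤ α) {N : ℕ}
    (h2c : 2 * c < (N : ℝ)) (hk2 : 2 ≤ β * (N : ℝ)) (hgap : (N:ℝ) + 2 ≤ α * (N:ℝ) + β * (N:ℝ)) :
    prob N (1/2 + c/(N:ℝ)) ⌊α * (N:ℝ)⌋
      (fun w => β * (N:ℝ) ≤ (rangeCount ⌊α * (N:ℝ)⌋ w : ℝ))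
      = (((1 - (1/2 + c/(N:ℝ)))/(1/2 + c/(N:ℝ))) ^ ⌊α * (N:ℝ)⌋₊
          - ((1 - (1/2 + c/(N:ℝ)))/(1/2 + c/(N:ℝ))) ^ N)
        / (((1 - (1/2 + c/(N:ℝ)))/(1/2 + c/(N:ℝ))) ^ (N + 1 - ⌈β * (N:ℝ)⌉₊)
          - ((1 - (1/2 + c/(N:ℝ)))/(1/2 + c/(N:ℝ))) ^ N) := by
  have hN0 : (0:ℝ) < (N:ℝ) := by nlinarith
  set p := 1/2 + c/(N:ℝ) with hp
  have hcN : 0 < c / (N:ℝ) := div_pos hc hN0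
  have hcN2 : c/(N:ℝ) < 1/2 := by rw [div_lt_iff₀ hN0]; nlinarith
  have hp0 : 0 < p := by rw [hp]; linarith
  have hp1 : p < 1 := by rw [hp]; linarith
  have hphalf : 1/2 < p := by rw [hp]; linarith
  set xn := ⌊α * (N:ℝ)⌋₊ with hxn
  set knn := ⌈β * (N:ℝ)⌉₊ with hknn
  have hxint : ⌊α * (N:ℝ)⌋ = ((xn : ℕ) : ℤ) :=
    (Int.natCast_floor_eq_floor (mul_nonneg hα0.le (Nat.cast_nonneg N))).symm
  have hxle : (xn:ℝ) ≤ α * N := Nat.floor_le (mul_nonneg hα0.le (Nat.cast_nonneg N))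
  have hxgt : α * N < xn + 1 := Nat.lt_floor_add_one _
  have hkge : β * N ≤ knn := Nat.le_ceil _
  have hklt : (knn:ℝ) < β * N + 1 := Nat.ceil_lt_add_one (mul_nonneg hβ0.le (Nat.cast_nonneg N))
  have hk1' : 1 ≤ knn := by
    rw [hknn]
    exact Nat.ceil_pos.mpr (by nlinarith)
  have hxN : xn < N := by
    have hr : (xn:ℝ) < (N:ℝ) := lt_of_le_of_lt hxle (by nlinarith)
    exact_mod_cast hr
  have hk2' : 2 ≤ knn := by
    have hr : ((2:ℕ):ℝ) ≤ (knn:ℝ) := by push_cast; linarith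
    exact_mod_cast hr
  have hkN : knn ≤ N := by
    have hβ1 : β < 1 := lt_of_le_of_lt hβα hα1
    have hr : (knn:ℝ) < ((N + 1 : ℕ) : ℝ) := by push_cast; nlinarith
    have := Nat.cast_lt (α := ℝ) |>.mp hr
    omega
  have hbx : N + 1 ≤ xn + knn := by
    have hr : ((N + 1 : ℕ) : ℝ) < ((xn + knn : ℕ) : ℝ) := by push_cast; linarith
    have := Nat.cast_lt (α := ℝ) |>.mp hr
    omega
  have hax : knn ≤ xn + 1 := by
    have hαβN : β * N ≤ α * N := by nlinarith
    have hr : (knn : ℝ) < ((xn + 2 : ℕ) : ℝ) := by push_cast; linarith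
    have := Nat.cast_lt (α := ℝ) |>.mp hr
    omega
  rw [hxint, prob_eq_toReal _ hp0.le hp1.le]
  have hcast : (((N + 1 - knn : ℕ)) : ℤ) = (N : ℤ) + 1 - knn := by omega
  have hcongr : eprob N p ((xn : ℕ) : ℤ) (fun w => β * (N:ℝ) ≤ (rangeCount ((xn : ℕ) : ℤ) w : ℝ))
      = eprob N p ((xn : ℕ) : ℤ) (hitsL ((xn : ℕ) : ℤ) (((N + 1 - knn : ℕ)) : ℤ)) := by
    apply eprob_congr_iff
    intro w hex
    have heq := equiv_case3 (k := knn) hex hk1' (by omega) (by push_cast; omega)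
      (by push_cast; omega)
    have h2 : knn ≤ rangeCount ((xn : ℕ) : ℤ) w
        ↔ hitsL ((xn : ℕ) : ℤ) (((N + 1 - knn : ℕ)) : ℤ) w := by
      rw [hcast]; exact heq
    exact (Nat.ceil_le).symm.trans h2
  rw [hcongr]
  exact eprob_hit_down hphalf hp1 (b := N + 1 - knn) (by omega) xn (by omega) (by omega)

lemma F_case4 (hc : 0 < c) (hα0 : 0 < α) (hα1 : α < 1) (hβ0 : 0 < β) (hβ1 : β ≤ 1) {N : ℕ}
    (h2c : 2 * c < (N : ℝ)) (hk2 : 2 ≤ β * (N : ℝ))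
    (hgap2 : α * (N:ℝ) + 2 ≤ β * (N:ℝ)) (hgap3 : (N:ℝ) + 2 ≤ α * (N:ℝ) + β * (N:ℝ)) :
    prob N (1/2 + c/(N:ℝ)) ⌊α * (N:ℝ)⌋
      (fun w => β * (N:ℝ) ≤ (rangeCount ⌊α * (N:ℝ)⌋ w : ℝ))
      = (1 - ((1 - (1/2 + c/(N:ℝ)))/(1/2 + c/(N:ℝ))) ^ ⌊α * (N:ℝ)⌋₊)
        / (1 - ((1 - (1/2 + c/(N:ℝ)))/(1/2 + c/(N:ℝ))) ^ (⌈β * (N:ℝ)⌉₊ - 1))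
      + (((1 - (1/2 + c/(N:ℝ)))/(1/2 + c/(N:ℝ))) ^ ⌊α * (N:ℝ)⌋₊
          - ((1 - (1/2 + c/(N:ℝ)))/(1/2 + c/(N:ℝ))) ^ N)
        / (((1 - (1/2 + c/(N:ℝ)))/(1/2 + c/(N:ℝ))) ^ (N + 1 - ⌈β * (N:ℝ)⌉₊)
          - ((1 - (1/2 + c/(N:ℝ)))/(1/2 + c/(N:ℝ))) ^ N)
      - 1 := by
  have hN0 : (0:ℝ) < (N:ℝ) := by nlinarith
  set p := 1/2 + c/(N:ℝ) with hp
  have hcN : 0 < c / (N:ℝ) := div_pos hc hN0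
  have hcN2 : c/(N:ℝ) < 1/2 := by rw [div_lt_iff₀ hN0]; nlinarith
  have hp0 : 0 < p := by rw [hp]; linarith
  have hp1 : p < 1 := by rw [hp]; linarith
  have hphalf : 1/2 < p := by rw [hp]; linarith
  set xn := ⌊α * (N:ℝ)⌋₊ with hxn
  set knn := ⌈β * (N:ℝ)⌉₊ with hknn
  have hxint : ⌊α * (N:ℝ)⌋ = ((xn : ℕ) : ℤ) :=
    (Int.natCast_floor_eq_floor (mul_nonneg hα0.le (Nat.cast_nonneg N))).symm
  have hxle : (xn:ℝ) ≤ α * N := Nat.floor_le (mul_nonneg hα0.le (Nat.cast_nonneg N))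
  have hxgt : α * N < xn + 1 := Nat.lt_floor_add_one _
  have hkge : β * N ≤ knn := Nat.le_ceil _
  have hklt : (knn:ℝ) < β * N + 1 := Nat.ceil_lt_add_one (mul_nonneg hβ0.le (Nat.cast_nonneg N))
  have hk1' : 1 ≤ knn := by
    rw [hknn]
    exact Nat.ceil_pos.mpr (by nlinarith)
  have hxN : xn < N := by
    have hr : (xn:ℝ) < (N:ℝ) := lt_of_le_of_lt hxle (by nlinarith)
    exact_mod_cast hr
  have hk2' : 2 ≤ knn := by
    have hr : ((2:ℕ):ℝ) ≤ (knn:ℝ) := by push_cast; linarith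
    exact_mod_cast hr
  have hkN : knn ≤ N := by
    have hr : (knn:ℝ) < ((N + 1 : ℕ) : ℝ) := by push_cast; nlinarith
    have := Nat.cast_lt (α := ℝ) |>.mp hr
    omega
  have hbx : N + 1 ≤ xn + knn := by
    have hr : ((N + 1 : ℕ) : ℝ) < ((xn + knn : ℕ) : ℝ) := by push_cast; linarith
    have := Nat.cast_lt (α := ℝ) |>.mp hr
    omega
  have hxa : xn + 2 ≤ knn := by
    have hr : ((xn + 2 : ℕ) : ℝ) ≤ (knn:ℝ) := by push_cast; linarith
    exact_mod_cast hr
  rw [hxint, prob_eq_toReal _ hp0.le hp1.le]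
  have hcasta : (((knn - 1 : ℕ)) : ℤ) = (knn : ℤ) - 1 := by omega
  have hcastb : (((N + 1 - knn : ℕ)) : ℤ) = (N : ℤ) + 1 - knn := by omega
  have hcongr : eprob N p ((xn : ℕ) : ℤ) (fun w => β * (N:ℝ) ≤ (rangeCount ((xn : ℕ) : ℤ) w : ℝ))
      = eprob N p ((xn : ℕ) : ℤ) (fun w => hitsL ((xn : ℕ) : ℤ) (((knn - 1 : ℕ)) : ℤ) w
          ∧ hitsL ((xn : ℕ) : ℤ) (((N + 1 - knn : ℕ)) : ℤ) w) := by
    apply eprob_congr_iff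
    intro w hex
    have heq := equiv_case4 (k := knn) hex hk1' (by push_cast; omega) (by push_cast; omega)
      (by push_cast; omega) (by push_cast; omega)
    have h2 : knn ≤ rangeCount ((xn : ℕ) : ℤ) w
        ↔ (hitsL ((xn : ℕ) : ℤ) (((knn - 1 : ℕ)) : ℤ) w
            ∧ hitsL ((xn : ℕ) : ℤ) (((N + 1 - knn : ℕ)) : ℤ) w) := by
      rw [hcasta, hcastb]; exact heq
    exact (Nat.ceil_le).symm.trans h2
  rw [hcongr]
  have hunion : eprob N p ((xn : ℕ) : ℤ)
      (fun w => hitsL ((xn : ℕ) : ℤ) (((knn - 1 : ℕ)) : ℤ) w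
        ∨ hitsL ((xn : ℕ) : ℤ) (((N + 1 - knn : ℕ)) : ℤ) w) = 1 := by
    have hcg : eprob N p ((xn : ℕ) : ℤ)
        (fun w => hitsL ((xn : ℕ) : ℤ) (((knn - 1 : ℕ)) : ℤ) w
          ∨ hitsL ((xn : ℕ) : ℤ) (((N + 1 - knn : ℕ)) : ℤ) w)
        = eprob N p ((xn : ℕ) : ℤ) (fun _ => True) := by
      apply eprob_congr_iff
      intro w hex
      refine iff_of_true ?_ trivial
      have := union_case4 (k := knn) hex (by push_cast; omega) (by push_cast; omega)
        (by push_cast; omega) (by push_cast; omega)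
      rwa [hcasta, hcastb]
    rw [hcg]
    exact eprob_true_one hp0 hp1 xn (by omega)
  have hIE := eprob_inter_add_union N p ((xn : ℕ) : ℤ)
    (hitsL ((xn : ℕ) : ℤ) (((knn - 1 : ℕ)) : ℤ))
    (hitsL ((xn : ℕ) : ℤ) (((N + 1 - knn : ℕ)) : ℤ))
  rw [hunion] at hIE
  have hfin : ∀ S : List Bool → Prop, eprob N p ((xn : ℕ) : ℤ) S ≠ ⊤ :=
    fun S => eprob_ne_top hp0.le hp1.le
  have htr := congrArg ENNReal.toReal hIE
  rw [ENNReal.toReal_add (hfin _) ENNReal.one_ne_top,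
    ENNReal.toReal_add (hfin _) (hfin _), ENNReal.toReal_one] at htr
  have hA := eprob_hit_up (N := N) hphalf hp1 (a := knn - 1) (by omega) (by omega) xn (by omega)
  have hB := eprob_hit_down (N := N) hphalf hp1 (b := N + 1 - knn) (by omega) xn (by omega) (by omega)
  rw [hA, hB] at htr
  linarith

/-! ### Value identities -/

lemma case3_value (hc : 0 < c) (hβ0 : 0 < β) (α : ℝ) :
    (Real.exp (-4*c*α) - Real.exp (-4*c*1)) / (Real.exp (-4*c*(1-β)) - Real.exp (-4*c*1))
      = (1 - Real.exp (4*c*(1-α))) / (1 - Real.exp (4*c*β)) := by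
  have hC0 : (0:ℝ) < Real.exp (-4*c*1) := Real.exp_pos _
  have hBC : Real.exp (-4*c*1) < Real.exp (-4*c*(1-β)) := Real.exp_lt_exp.mpr (by nlinarith)
  have hW : 1 < Real.exp (4*c*β) := Real.one_lt_exp_iff.mpr (by positivity)
  have h1 : Real.exp (4*c*(1-α)) = Real.exp (-4*c*α) / Real.exp (-4*c*1) := by
    rw [← Real.exp_sub]; congr 1; ring
  have h2 : Real.exp (4*c*β) = Real.exp (-4*c*(1-β)) / Real.exp (-4*c*1) := by
    rw [← Real.exp_sub]; congr 1; ring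
  have hd1 : Real.exp (-4*c*(1-β)) - Real.exp (-4*c*1) ≠ 0 := by linarith
  have hd2 : 1 - Real.exp (4*c*β) ≠ 0 := by linarith
  rw [div_eq_div_iff hd1 hd2, h1, h2]
  field_simp
  ring

lemma case4_value (hc : 0 < c) (hβ0 : 0 < β) (α : ℝ) :
    (1 - Real.exp (-4*c*α)) / (1 - Real.exp (-4*c*β))
      + (Real.exp (-4*c*α) - Real.exp (-4*c*1)) / (Real.exp (-4*c*(1-β)) - Real.exp (-4*c*1))
      - 1
    = Real.exp (-4*α*c) * (Real.exp (4*c*(1-β)) - 1) / (1 - Real.exp (-4*c*β)) := by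
  set u := Real.exp (-4*c*α) with hudef
  set A := Real.exp (-4*c*β) with hAdef
  set vB := Real.exp (-4*c*(1-β)) with hvdef
  have hA1 : A < 1 := Real.exp_lt_one_iff.mpr (by nlinarith)
  have hA0 : (0:ℝ) < A := Real.exp_pos _
  have hvB : (0:ℝ) < vB := Real.exp_pos _
  have hC : Real.exp (-4*c*1) = A * vB := by
    rw [hAdef, hvdef, ← Real.exp_add]; congr 1; ring
  have hu : Real.exp (-4*α*c) = u := by rw [hudef]; congr 1; ring
  have hinv : Real.exp (4*c*(1-β)) = 1 / vB := by
    rw [hvdef, one_div, ← Real.exp_neg]; congr 1; ring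
  rw [hu, hC, hinv]
  have hd1 : 1 - A ≠ 0 := by linarith
  have hd2 : vB - A * vB ≠ 0 := by
    have hpos : 0 < vB * (1 - A) := mul_pos hvB (by linarith)
    intro h0
    nlinarith
  field_simp
  ring

lemma boundary2_value (c α β : ℝ) (h1β : 1 - β = α) :
    (1 - Real.exp (-4*c*α)) / (1 - Real.exp (-4*c*β))
      = Real.exp (-4*α*c) * (Real.exp (4*c*(1-β)) - 1) / (1 - Real.exp (-4*c*β)) := by
  congr 1
  rw [show (4*c*(1-β)) = 4*c*α from by rw [h1β], mul_sub, mul_one, ← Real.exp_add,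
    show (-4*α*c + 4*c*α : ℝ) = 0 from by ring, Real.exp_zero,
    show (-4*α*c : ℝ) = -4*c*α from by ring]

lemma boundary3_value (hc : 0 < c) (hβ0 : 0 < β) (hαβ : α = β) :
    (1 - Real.exp (4*c*(1-α))) / (1 - Real.exp (4*c*β))
      = Real.exp (-4*α*c) * (Real.exp (4*c*(1-β)) - 1) / (1 - Real.exp (-4*c*β)) := by
  subst hαβ
  set V := Real.exp (4*c*(1-α)) with hVdef
  set W := Real.exp (4*c*α) with hWdef
  have hW : 1 < W := Real.one_lt_exp_iff.mpr (by positivity)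
  have hW0 : (0:ℝ) < W := Real.exp_pos _
  have h1 : Real.exp (-4*c*α) = 1 / W := by
    rw [hWdef, one_div, ← Real.exp_neg]; congr 1; ring
  have h2 : Real.exp (-4*α*c) = 1 / W := by
    rw [hWdef, one_div, ← Real.exp_neg]; congr 1; ring
  rw [h1, h2]
  have hd1 : 1 - W ≠ 0 := by linarith
  have key : (1:ℝ) - 1 / W = (W - 1)/W := by field_simp
  rw [show (1:ℝ)/W * (V-1) = (V-1)/W from by ring, key, div_div_div_comm,
    div_self (ne_of_gt hW0), div_one,
    show (1 - V) = -(V-1) from by ring, show (1 - W) = -(W-1) from by ring, neg_div_neg_eq]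

/-! ### Tendsto per case -/

lemma tendsto_case1 (hc : 0 < c) (hα0 : 0 < α) (hα1 : α < 1) (hβ0 : 0 < β)
    (hβα : β ≤ α) (hβ1α : β ≤ 1 - α) :
    Tendsto (fun N : ℕ => prob N (1/2 + c/(N:ℝ)) ⌊α * (N:ℝ)⌋
      (fun w => β * (N:ℝ) ≤ (rangeCount ⌊α * (N:ℝ)⌋ w : ℝ))) atTop (𝓝 1) := by
  have hev1 : ∀ᶠ N : ℕ in atTop, 2*c < (N:ℝ) :=
    tendsto_natCast_atTop_atTop.eventually_gt_atTop _
  have hev2 : ∀ᶠ N : ℕ in atTop, 1 ≤ β*(N:ℝ) :=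
    (Tendsto.const_mul_atTop hβ0 tendsto_natCast_atTop_atTop).eventually_ge_atTop 1
  apply tendsto_const_nhds.congr'
  filter_upwards [hev1, hev2] with N h1 h2
  exact (F_case1 hc hα0 hα1 hβ0 hβα hβ1α h1 h2).symm

lemma tendsto_case2' (hc : 0 < c) (hα0 : 0 < α) (hα1 : α < 1) (hβ0 : 0 < β)
    (hαβ : α < β) (hβ1α : β ≤ 1 - α) :
    Tendsto (fun N : ℕ => prob N (1/2 + c/(N:ℝ)) ⌊α * (N:ℝ)⌋
      (fun w => β * (N:ℝ) ≤ (rangeCount ⌊α * (N:ℝ)⌋ w : ℝ))) atTop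
      (𝓝 ((1 - Real.exp (-4*c*α)) / (1 - Real.exp (-4*c*β)))) := by
  have hev1 : ∀ᶠ N : ℕ in atTop, 2*c < (N:ℝ) :=
    tendsto_natCast_atTop_atTop.eventually_gt_atTop _
  have hev2 : ∀ᶠ N : ℕ in atTop, 2 ≤ β*(N:ℝ) :=
    (Tendsto.const_mul_atTop hβ0 tendsto_natCast_atTop_atTop).eventually_ge_atTop 2
  have hev3 : ∀ᶠ N : ℕ in atTop, α*(N:ℝ) + 2 ≤ β*(N:ℝ) := by
    have h := (Tendsto.const_mul_atTop (by linarith : (0:ℝ) < β - α)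
      tendsto_natCast_atTop_atTop).eventually_ge_atTop 2
    filter_upwards [h] with N hN
    nlinarith
  have hk1ev : ∀ᶠ N : ℕ in atTop, 1 ≤ ⌈β*(N:ℝ)⌉₊ := by
    filter_upwards [hev2] with N hN
    exact Nat.ceil_pos.mpr (by nlinarith)
  have hxpow := rho_pow_tendsto hc (tendsto_floor_div hα0.le)
  have halim : Tendsto (fun N : ℕ => ((⌈β*(N:ℝ)⌉₊ - 1 : ℕ) : ℝ) / (N:ℝ)) atTop (𝓝 β) := by
    have h := (tendsto_ceil_div hβ0.le).sub tendsto_one_div_atTop_nhds_zero_nat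
    rw [sub_zero] at h
    apply h.congr'
    filter_upwards [hk1ev] with N hN
    rw [Nat.cast_sub hN, Nat.cast_one, sub_div]
  have hapow := rho_pow_tendsto hc halim
  have hne : 1 - Real.exp (-4*c*β) ≠ 0 := by
    have h := Real.exp_lt_one_iff.mpr (show -4*c*β < 0 by nlinarith)
    linarith
  have hlim := ((tendsto_const_nhds (x := (1:ℝ))).sub hxpow).div
    ((tendsto_const_nhds (x := (1:ℝ))).sub hapow) hne
  apply hlim.congr'
  filter_upwards [hev1, hev2, hev3] with N h1 h2 h3
  exact (F_case2 hc hα0 hα1 hβ0 hβ1α h1 h2 h3).symm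

lemma tendsto_case3' (hc : 0 < c) (hα0 : 0 < α) (hα1 : α < 1) (hβ0 : 0 < β)
    (hαβ : 1 - α < β) (hβα : β ≤ α) :
    Tendsto (fun N : ℕ => prob N (1/2 + c/(N:ℝ)) ⌊α * (N:ℝ)⌋
      (fun w => β * (N:ℝ) ≤ (rangeCount ⌊α * (N:ℝ)⌋ w : ℝ))) atTop
      (𝓝 ((1 - Real.exp (4*c*(1-α))) / (1 - Real.exp (4*c*β)))) := by
  have hβ1 : β < 1 := lt_of_le_of_lt hβα hα1
  have hev1 : ∀ᶠ N : ℕ in atTop, 2*c < (N:ℝ) :=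
    tendsto_natCast_atTop_atTop.eventually_gt_atTop _
  have hev2 : ∀ᶠ N : ℕ in atTop, 2 ≤ β*(N:ℝ) :=
    (Tendsto.const_mul_atTop hβ0 tendsto_natCast_atTop_atTop).eventually_ge_atTop 2
  have hev3 : ∀ᶠ N : ℕ in atTop, (N:ℝ) + 2 ≤ α*(N:ℝ) + β*(N:ℝ) := by
    have h := (Tendsto.const_mul_atTop (by linarith : (0:ℝ) < α + β - 1)
      tendsto_natCast_atTop_atTop).eventually_ge_atTop 2
    filter_upwards [h] with N hN
    nlinarith
  have hxpow := rho_pow_tendsto hc (tendsto_floor_div hα0.le)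
  have hNdiv : Tendsto (fun N : ℕ => ((N:ℕ):ℝ)/(N:ℝ)) atTop (𝓝 1) := by
    apply tendsto_const_nhds.congr'
    filter_upwards [eventually_ge_atTop 1] with N hN
    exact (div_self (Nat.cast_ne_zero.mpr (by omega))).symm
  have hNpow := rho_pow_tendsto hc hNdiv
  have hkle : ∀ N : ℕ, ⌈β*(N:ℝ)⌉₊ ≤ N + 1 := by
    intro N
    have h1 : (⌈β*(N:ℝ)⌉₊:ℝ) < β*N + 1 :=
      Nat.ceil_lt_add_one (mul_nonneg hβ0.le (Nat.cast_nonneg N))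
    have h2 : β*(N:ℝ) ≤ N := by nlinarith [Nat.cast_nonneg (α := ℝ) N]
    have h3 : (⌈β*(N:ℝ)⌉₊ : ℝ) < ((N + 2 : ℕ):ℝ) := by push_cast; linarith
    have := Nat.cast_lt (α := ℝ) |>.mp h3
    omega
  have hblim : Tendsto (fun N : ℕ => ((N + 1 - ⌈β*(N:ℝ)⌉₊ : ℕ):ℝ)/(N:ℝ)) atTop (𝓝 (1 - β)) := by
    have h := (hNdiv.add tendsto_one_div_atTop_nhds_zero_nat).sub (tendsto_ceil_div hβ0.le)
    rw [add_zero] at h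
    apply h.congr'
    filter_upwards [] with N
    rw [Nat.cast_sub (hkle N), Nat.cast_add, Nat.cast_one, sub_div, add_div]
  have hbpow := rho_pow_tendsto hc hblim
  have hdne : Real.exp (-4*c*(1-β)) - Real.exp (-4*c*1) ≠ 0 := by
    have h := Real.exp_lt_exp.mpr (show -4*c*1 < -4*c*(1-β) by nlinarith)
    linarith
  have hlim := (hxpow.sub hNpow).div (hbpow.sub hNpow) hdne
  rw [case3_value hc hβ0 α] at hlim
  apply hlim.congr'
  filter_upwards [hev1, hev2, hev3] with N h1 h2 h3
  exact (F_case3 hc hα0 hα1 hβ0 hβα h1 h2 h3).symm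

lemma tendsto_case4' (hc : 0 < c) (hα0 : 0 < α) (hα1 : α < 1) (hβ0 : 0 < β) (hβ1 : β ≤ 1)
    (hαβ : α < β) (h1αβ : 1 - α < β) :
    Tendsto (fun N : ℕ => prob N (1/2 + c/(N:ℝ)) ⌊α * (N:ℝ)⌋
      (fun w => β * (N:ℝ) ≤ (rangeCount ⌊α * (N:ℝ)⌋ w : ℝ))) atTop
      (𝓝 (Real.exp (-4*α*c) * (Real.exp (4*c*(1-β)) - 1) / (1 - Real.exp (-4*c*β)))) := by
  have hev1 : ∀ᶠ N : ℕ in atTop, 2*c < (N:ℝ) :=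
    tendsto_natCast_atTop_atTop.eventually_gt_atTop _
  have hev2 : ∀ᶠ N : ℕ in atTop, 2 ≤ β*(N:ℝ) :=
    (Tendsto.const_mul_atTop hβ0 tendsto_natCast_atTop_atTop).eventually_ge_atTop 2
  have hev3 : ∀ᶠ N : ℕ in atTop, α*(N:ℝ) + 2 ≤ β*(N:ℝ) := by
    have h := (Tendsto.const_mul_atTop (by linarith : (0:ℝ) < β - α)
      tendsto_natCast_atTop_atTop).eventually_ge_atTop 2
    filter_upwards [h] with N hN
    nlinarith
  have hev4 : ∀ᶠ N : ℕ in atTop, (N:ℝ) + 2 ≤ α*(N:ℝ) + β*(N:ℝ) := by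
    have h := (Tendsto.const_mul_atTop (by linarith : (0:ℝ) < α + β - 1)
      tendsto_natCast_atTop_atTop).eventually_ge_atTop 2
    filter_upwards [h] with N hN
    nlinarith
  have hk1ev : ∀ᶠ N : ℕ in atTop, 1 ≤ ⌈β*(N:ℝ)⌉₊ := by
    filter_upwards [hev2] with N hN
    exact Nat.ceil_pos.mpr (by nlinarith)
  have hxpow := rho_pow_tendsto hc (tendsto_floor_div hα0.le)
  have halim : Tendsto (fun N : ℕ => ((⌈β*(N:ℝ)⌉₊ - 1 : ℕ) : ℝ) / (N:ℝ)) atTop (𝓝 β) := by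
    have h := (tendsto_ceil_div hβ0.le).sub tendsto_one_div_atTop_nhds_zero_nat
    rw [sub_zero] at h
    apply h.congr'
    filter_upwards [hk1ev] with N hN
    rw [Nat.cast_sub hN, Nat.cast_one, sub_div]
  have hapow := rho_pow_tendsto hc halim
  have hNdiv : Tendsto (fun N : ℕ => ((N:ℕ):ℝ)/(N:ℝ)) atTop (𝓝 1) := by
    apply tendsto_const_nhds.congr'
    filter_upwards [eventually_ge_atTop 1] with N hN
    exact (div_self (Nat.cast_ne_zero.mpr (by omega))).symm
  have hNpow := rho_pow_tendsto hc hNdiv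
  have hkle : ∀ N : ℕ, ⌈β*(N:ℝ)⌉₊ ≤ N + 1 := by
    intro N
    have h1 : (⌈β*(N:ℝ)⌉₊:ℝ) < β*N + 1 :=
      Nat.ceil_lt_add_one (mul_nonneg hβ0.le (Nat.cast_nonneg N))
    have h2 : β*(N:ℝ) ≤ N := by nlinarith [Nat.cast_nonneg (α := ℝ) N]
    have h3 : (⌈β*(N:ℝ)⌉₊ : ℝ) < ((N + 2 : ℕ):ℝ) := by push_cast; linarith
    have := Nat.cast_lt (α := ℝ) |>.mp h3
    omega
  have hblim : Tendsto (fun N : ℕ => ((N + 1 - ⌈β*(N:ℝ)⌉₊ : ℕ):ℝ)/(N:ℝ)) atTop (𝓝 (1 - β)) := by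
    have h := (hNdiv.add tendsto_one_div_atTop_nhds_zero_nat).sub (tendsto_ceil_div hβ0.le)
    rw [add_zero] at h
    apply h.congr'
    filter_upwards [] with N
    rw [Nat.cast_sub (hkle N), Nat.cast_add, Nat.cast_one, sub_div, add_div]
  have hbpow := rho_pow_tendsto hc hblim
  have hne1 : 1 - Real.exp (-4*c*β) ≠ 0 := by
    have h := Real.exp_lt_one_iff.mpr (show -4*c*β < 0 by nlinarith)
    linarith
  have hne2 : Real.exp (-4*c*(1-β)) - Real.exp (-4*c*1) ≠ 0 := by
    have h := Real.exp_lt_exp.mpr (show -4*c*1 < -4*c*(1-β) by nlinarith)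
    linarith
  have hlim := ((((tendsto_const_nhds (x := (1:ℝ))).sub hxpow).div
    ((tendsto_const_nhds (x := (1:ℝ))).sub hapow) hne1).add
    ((hxpow.sub hNpow).div (hbpow.sub hNpow) hne2)).sub (tendsto_const_nhds (x := (1:ℝ)))
  rw [case4_value hc hβ0 α] at hlim
  apply hlim.congr'
  filter_upwards [hev1, hev2, hev3, hev4] with N h1 h2 h3 h4
  exact (F_case4 hc hα0 hα1 hβ0 hβ1 h1 h2 h3 h4).symm

end cases
end RW

/-- Proposition 1 (weakly asymmetric case): for the walk with `p_N = 1/2 + c/N`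
started from `⌊αN⌋`, `P_{⌊αN⌋}(R_N ≥ βN)` converges to the tail of `G_{c,α}`. -/
theorem range_limit_weakly_asymmetric (c α β : ℝ) (hc : 0 < c)
    (hα0 : 0 < α) (hα1 : α < 1) (hβ0 : 0 < β) (hβ1 : β ≤ 1) :
    (β ≤ min α (1 - α) →
      Tendsto (fun N : ℕ => prob N (1/2 + c / (N : ℝ)) ⌊α * (N : ℝ)⌋
          fun w => β * (N : ℝ) ≤ (rangeCount ⌊α * (N : ℝ)⌋ w : ℝ))
        atTop (𝓝 1)) ∧
    (α ≤ β ∧ β ≤ 1 - α →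
      Tendsto (fun N : ℕ => prob N (1/2 + c / (N : ℝ)) ⌊α * (N : ℝ)⌋
          fun w => β * (N : ℝ) ≤ (rangeCount ⌊α * (N : ℝ)⌋ w : ℝ))
        atTop (𝓝 ((1 - Real.exp (-4 * c * α)) / (1 - Real.exp (-4 * c * β))))) ∧
    (1 - α ≤ β ∧ β ≤ α →
      Tendsto (fun N : ℕ => prob N (1/2 + c / (N : ℝ)) ⌊α * (N : ℝ)⌋
          fun w => β * (N : ℝ) ≤ (rangeCount ⌊α * (N : ℝ)⌋ w : ℝ))
        atTop (𝓝 ((1 - Real.exp (4 * c * (1 - α))) / (1 - Real.exp (4 * c * β))))) ∧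
    (max α (1 - α) ≤ β →
      Tendsto (fun N : ℕ => prob N (1/2 + c / (N : ℝ)) ⌊α * (N : ℝ)⌋
          fun w => β * (N : ℝ) ≤ (rangeCount ⌊α * (N : ℝ)⌋ w : ℝ))
        atTop
        (𝓝 (Real.exp (-4 * α * c) * (Real.exp (4 * c * (1 - β)) - 1) /
          (1 - Real.exp (-4 * c * β))))) := by
  have hexpβ : Real.exp (-4 * c * β) < 1 := Real.exp_lt_one_iff.mpr (by nlinarith)
  have hne : 1 - Real.exp (-4 * c * β) ≠ 0 := by linarith
  have hcase2 : α ≤ β → β ≤ 1 - α →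
      Tendsto (fun N : ℕ => prob N (1/2 + c / (N : ℝ)) ⌊α * (N : ℝ)⌋
        fun w => β * (N : ℝ) ≤ (rangeCount ⌊α * (N : ℝ)⌋ w : ℝ)) atTop
        (𝓝 ((1 - Real.exp (-4 * c * α)) / (1 - Real.exp (-4 * c * β)))) := by
    intro h1 h2
    rcases eq_or_lt_of_le h1 with heq | hlt
    · have hval : (1 - Real.exp (-4 * c * α)) / (1 - Real.exp (-4 * c * β)) = 1 := by
        rw [heq]
        exact div_self hne
      rw [hval]
      exact RW.tendsto_case1 hc hα0 hα1 hβ0 heq.ge h2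
    · exact RW.tendsto_case2' hc hα0 hα1 hβ0 hlt h2
  have hcase3 : 1 - α ≤ β → β ≤ α →
      Tendsto (fun N : ℕ => prob N (1/2 + c / (N : ℝ)) ⌊α * (N : ℝ)⌋
        fun w => β * (N : ℝ) ≤ (rangeCount ⌊α * (N : ℝ)⌋ w : ℝ)) atTop
        (𝓝 ((1 - Real.exp (4 * c * (1 - α))) / (1 - Real.exp (4 * c * β)))) := by
    intro h1 h2
    rcases eq_or_lt_of_le h1 with heq | hlt
    · have hne1 : 1 - Real.exp (4 * c * β) ≠ 0 := by
        have h := Real.one_lt_exp_iff.mpr (show 0 < 4 * c * β by positivity)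
        linarith
      rw [heq, div_self hne1]
      exact RW.tendsto_case1 hc hα0 hα1 hβ0 h2 heq.ge
    · exact RW.tendsto_case3' hc hα0 hα1 hβ0 hlt h2
  refine ⟨fun hmin => ?_, fun h => hcase2 h.1 h.2, fun h => hcase3 h.1 h.2, fun hmax => ?_⟩
  · exact RW.tendsto_case1 hc hα0 hα1 hβ0 (le_trans hmin (min_le_left _ _))
      (le_trans hmin (min_le_right _ _))
  · have hαβ : α ≤ β := le_trans (le_max_left _ _) hmax
    have h1αβ : 1 - α ≤ β := le_trans (le_max_right _ _) hmax
    rcases eq_or_lt_of_le hαβ with heqα | hltα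
    · rw [← RW.boundary3_value hc hβ0 heqα]
      exact hcase3 h1αβ heqα.ge
    · rcases eq_or_lt_of_le h1αβ with heqβ | hltβ
      · rw [← RW.boundary2_value c α β (by linarith)]
        exact hcase2 hαβ (by linarith)
      · exact RW.tendsto_case4' hc hα0 hα1 hβ0 hβ1 hltα hltβ
end
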